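/- arXiv:2212.03644 — 6 statements merged into one kernel-verified Lean document; each statement's English description precedes it below -/
import Mathlib

section
/- There is no 5-fold 1-perfect code in the Hamming graph H(3,4). (Indeed, although 5·4^3/((4-1)·3+1) = 32 is an integer, the Lloyd condition fails since 3 ≢ 1 (mod 4): a μ-fold 1-perfect code would force -1 to be an eigenvalue -3 + 4i of H(3,4) for some integer i, which is impossible.) -/
set_option maxRecDepth 10000

open Finset

/-- Weights for the inverse-ball-operator argument in H(3,4). -/
def alp : ℕ → ℤ := fun k => if k = 0 then 3 else if k = 1 then 13 else if k = 2 then -7 else 3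

lemma alp_total : (∑ y : Fin 3 → Fin 4, alp (hammingDist 0 y)) = 12 := by decide

lemma alp_ball : ∀ z : Fin 3 → Fin 4,
    (∑ y : Fin 3 → Fin 4, if hammingDist y z ≤ 1 then alp (hammingDist 0 y) else 0)
      = if z = 0 then 120 else 0 := by decide

/-- There is no 5-fold 1-perfect code in the Hamming graph H(3,4). -/
theorem stmt_3 :
    ¬ ∃ C : Set (Fin 3 → Fin 4), C.Nonempty ∧ C ≠ Set.univ ∧
      ∀ x : Fin 3 → Fin 4,
        Nat.card {y : Fin 3 → Fin 4 // y ∈ C ∧ hammingDist x y ≤ 1} = 5 := by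
  classical
  rintro ⟨C, -, -, h⟩
  set f : (Fin 3 → Fin 4) → ℤ := fun z => if z ∈ C then 1 else 0 with hf
  have hN : ∀ x : Fin 3 → Fin 4,
      (∑ z : Fin 3 → Fin 4, if hammingDist x z ≤ 1 then f z else 0) = 5 := by
    intro x
    have hx := h x
    rw [Nat.card_eq_fintype_card, Fintype.card_subtype] at hx
    calc (∑ z : Fin 3 → Fin 4, if hammingDist x z ≤ 1 then f z else 0)
        = ∑ z : Fin 3 → Fin 4,
            (if z ∈ C ∧ hammingDist x z ≤ 1 then (1:ℤ) else 0) := by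
          refine Finset.sum_congr rfl fun z _ => ?_
          simp only [hf]
          by_cases h1 : hammingDist x z ≤ 1 <;> by_cases h2 : z ∈ C <;> simp [h1, h2]
      _ = ((univ.filter fun z => z ∈ C ∧ hammingDist x z ≤ 1).card : ℤ) := by
          rw [Finset.sum_boole]
      _ = 5 := by rw [hx]; norm_num
  have key : (60:ℤ) = 120 * f 0 := by
    calc (60:ℤ) = (∑ y : Fin 3 → Fin 4, alp (hammingDist 0 y)) * 5 := by
          rw [alp_total]; norm_num
      _ = ∑ y : Fin 3 → Fin 4, alp (hammingDist 0 y) * 5 := by rw [Finset.sum_mul]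
      _ = ∑ y : Fin 3 → Fin 4, alp (hammingDist 0 y) *
            (∑ z : Fin 3 → Fin 4, if hammingDist y z ≤ 1 then f z else 0) := by
          refine Finset.sum_congr rfl fun y _ => ?_; rw [hN y]
      _ = ∑ y : Fin 3 → Fin 4, ∑ z : Fin 3 → Fin 4,
            (if hammingDist y z ≤ 1 then alp (hammingDist 0 y) else 0) * f z := by
          refine Finset.sum_congr rfl fun y _ => ?_
          rw [Finset.mul_sum]
          refine Finset.sum_congr rfl fun z _ => ?_
          by_cases h1 : hammingDist y z ≤ 1 <;> simp [h1]
      _ = ∑ z : Fin 3 → Fin 4, ∑ y : Fin 3 → Fin 4,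
            (if hammingDist y z ≤ 1 then alp (hammingDist 0 y) else 0) * f z :=
          Finset.sum_comm
      _ = ∑ z : Fin 3 → Fin 4,
            (∑ y : Fin 3 → Fin 4,
              if hammingDist y z ≤ 1 then alp (hammingDist 0 y) else 0) * f z := by
          refine Finset.sum_congr rfl fun z _ => ?_; rw [Finset.sum_mul]
      _ = ∑ z : Fin 3 → Fin 4, (if z = 0 then (120:ℤ) else 0) * f z := by
          refine Finset.sum_congr rfl fun z _ => ?_; rw [alp_ball z]
      _ = 120 * f 0 := by
          rw [Finset.sum_eq_single (0 : Fin 3 → Fin 4)]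
          · simp
          · intro b _ hb; simp [hb]
          · intro hb; exact absurd (Finset.mem_univ _) hb
  simp only [hf] at key
  by_cases h0 : (0 : Fin 3 → Fin 4) ∈ C <;> simp [h0] at key
end

section
/- Let t ≤ m be positive integers and p a prime power. Then there exists a (p^t - 1)/(p - 1)-fold spread of F_p^m by t-dimensional subspaces: a collection of t-dimensional subspaces Y_1, ..., Y_N of F_p^m such that every nonzero vector of F_p^m lies in exactly (p^t-1)/(p-1) of them (counted with repetition of subspaces). -/
open Pointwise Polynomial

-- extension of arbitrary finite field of any degree
lemma spread_ext (K : Type) [Field K] [Fintype K] (m : ℕ) (hm : m ≠ 0) :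
    ∃ (F : Type) (_ : Field F) (_ : Algebra K F) (_ : Finite F),
      Module.finrank K F = m := by
  classical
  obtain ⟨r, hr⟩ := CharP.exists K
  haveI : CharP K r := hr
  obtain ⟨s, hrp, hcard⟩ := FiniteField.card K r
  haveI : Fact r.Prime := ⟨hrp⟩
  have hr1 : 1 < r := hrp.one_lt
  set m' : ℕ := (s : ℕ) * m with hm'
  have hm'0 : m' ≠ 0 := by
    have := s.pos
    positivity
  letI : Algebra (ZMod r) K := ZMod.algebra K r
  set F := GaloisField r m' with hF
  haveI : Finite F := inferInstance
  haveI : Fintype F := Fintype.ofFinite F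
  have hcardF : Fintype.card F = r ^ m' := by
    rw [← Nat.card_eq_fintype_card]
    exact GaloisField.card r m' hm'0
  -- splits
  have hdvd : (X ^ r ^ (s : ℕ) - X : (ZMod r)[X]) ∣ X ^ r ^ m' - X := by
    have h1 : (1 : ℕ) ≤ r ^ (s : ℕ) := Nat.one_le_pow _ _ hrp.pos
    have h2 : (1 : ℕ) ≤ r ^ m' := Nat.one_le_pow _ _ hrp.pos
    obtain ⟨k, hk⟩ : r ^ (s : ℕ) - 1 ∣ r ^ m' - 1 := by
      have : r ^ m' - 1 = (r ^ (s : ℕ)) ^ m - 1 ^ m := by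
        rw [one_pow, ← pow_mul, hm']
      rw [this]
      exact Nat.sub_dvd_pow_sub_pow _ 1 m
    have e1 : (X ^ r ^ (s : ℕ) - X : (ZMod r)[X]) = X * (X ^ (r ^ (s:ℕ) - 1) - 1) := by
      rw [mul_sub, mul_one, ← pow_succ']
      congr 2
      omega
    have e2 : (X ^ r ^ m' - X : (ZMod r)[X]) = X * (X ^ (r ^ m' - 1) - 1) := by
      rw [mul_sub, mul_one, ← pow_succ']
      congr 2
      omega
    rw [e1, e2]
    apply mul_dvd_mul_left
    rw [hk, pow_mul]
    simpa using sub_dvd_pow_sub_pow (X ^ (r ^ (s:ℕ) - 1) : (ZMod r)[X]) 1 k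
  have hsplits : Splits ((X ^ r ^ (s : ℕ) - X : (ZMod r)[X]).map (algebraMap (ZMod r) F)) := by
    have hbig : Splits ((X ^ Fintype.card F - X : (ZMod r)[X]).map (algebraMap (ZMod r) F)) :=
      FiniteField.splits_X_pow_card_sub_X (p := r) (K := F)
    rw [hcardF] at hbig
    exact Splits.of_dvd hbig
      (Polynomial.map_ne_zero (FiniteField.X_pow_card_pow_sub_X_ne_zero _ hm'0 hr1)) (Polynomial.map_dvd _ hdvd)
  haveI : IsSplittingField (ZMod r) K (X ^ r ^ (s : ℕ) - X) :=
    FiniteField.isSplittingField_of_card_eq _ _ hcard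
  let σ : K →ₐ[ZMod r] F := IsSplittingField.lift K (X ^ r ^ (s : ℕ) - X) hsplits
  letI : Algebra K F := σ.toRingHom.toAlgebra
  refine ⟨F, inferInstance, inferInstance, inferInstance, ?_⟩
  have h := Module.card_eq_pow_finrank (K := K) (V := F)
  rw [hcardF, hcard, ← pow_mul] at h
  have h2 := Nat.pow_right_injective hr1 h
  have h3 : (s : ℕ) * m = (s : ℕ) * Module.finrank K F := hm' ▸ h2
  exact (Nat.eq_of_mul_eq_mul_left s.pos h3).symm


lemma spread_quot_count {G : Type*} [Group G] [Finite G] (H : Subgroup G)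
    (P : G ⧸ H → Prop) :
    Nat.card {v : G // P (QuotientGroup.mk v)} = Nat.card H * Nat.card {q // P q} := by
  classical
  have e := QuotientGroup.preimageMkEquivSubgroupProdSet H {q | P q}
  have h2 : Nat.card ↥(QuotientGroup.mk ⁻¹' {q : G ⧸ H | P q}) = Nat.card H * Nat.card {q // P q} := by
    rw [Nat.card_congr e, Nat.card_prod]
    rfl
  rw [← h2]
  exact Nat.card_congr (Equiv.subtypeEquivRight fun v => Iff.rfl)

lemma spread_core (K : Type*) [Field K] [Fintype K] (F : Type*) [Field F] [Algebra K F]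
    [Finite F] (t : ℕ) (ht : 0 < t) (htm : t ≤ Module.finrank K F) :
    ∃ (N : ℕ) (Y : Fin N → Submodule K F),
      (∀ i, Module.finrank K (Y i) = t) ∧
      ∀ x : F, x ≠ 0 →
        Nat.card {i : Fin N // x ∈ Y i} =
          (Fintype.card K ^ t - 1) / (Fintype.card K - 1) := by
  classical
  cases nonempty_fintype F
  set p := Fintype.card K with hp
  have hp1 : 1 < p := Fintype.one_lt_card
  -- a subspace of finrank t
  obtain ⟨W, hW⟩ : ∃ W : Submodule K F, Module.finrank K W = t := by
    set b := Module.finBasis K F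
    refine ⟨Submodule.span K (Set.range (⇑b ∘ Fin.castLE htm)), ?_⟩
    rw [finrank_span_eq_card (b.linearIndependent.comp _ (Fin.castLE_injective htm))]
    simp
  have memW : ∀ (v : Fˣ) (x : F), x ∈ v • W ↔ v⁻¹ • x ∈ W := fun v x => by
    rw [← SetLike.mem_coe]
    erw [Submodule.coe_pointwise_smul, Set.mem_smul_set_iff_inv_smul_mem,
      SetLike.mem_coe]
  have frk : ∀ v : Fˣ, Module.finrank K ↥(v • W) = t := fun v => by
    have h : (v • W) = W.map (DistribMulAction.toLinearEquiv K F v : F →ₗ[K] F) := rfl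
    rw [h, LinearEquiv.finrank_map_eq, hW]
  -- subgroup of scalars
  set H : Subgroup Fˣ := (Units.map (algebraMap K F : K →* F)).range with hH
  have cardH : Nat.card H = p - 1 := by
    have e2 : Kˣ ≃ H :=
      (MonoidHom.ofInjective (Units.map_injective ((algebraMap K F).injective))).toEquiv
    rw [← Nat.card_congr e2, Nat.card_eq_fintype_card, Fintype.card_units]
  -- invariance under H
  have hscal : ∀ (h : Fˣ), h ∈ H → h • W = W := by
    rintro h ⟨c, rfl⟩
    apply le_antisymm
    · rintro y ⟨w, hw, rfl⟩
      show ((Units.map (algebraMap K F : K →* F) c : Fˣ) : F) * w ∈ W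
      have : ((Units.map (algebraMap K F : K →* F) c : Fˣ) : F) * w = (c : K) • w := by
        simp [Algebra.smul_def]
      rw [this]
      exact W.smul_mem _ hw
    · intro w hw
      rw [memW]
      show ((Units.map (algebraMap K F : K →* F) c)⁻¹ : Fˣ) • w ∈ W
      rw [← map_inv]
      show ((Units.map (algebraMap K F : K →* F) c⁻¹ : Fˣ) : F) * w ∈ W
      have : ((Units.map (algebraMap K F : K →* F) c⁻¹ : Fˣ) : F) * w = ((c⁻¹ : Kˣ) : K) • w := by
        simp [Algebra.smul_def]
      rw [this]
      exact W.smul_mem _ hw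
  have hconst : ∀ a b : Fˣ, (QuotientGroup.leftRel H) a b → a • W = b • W := by
    intro a b hab
    rw [QuotientGroup.leftRel_apply] at hab
    have : b = a * (a⁻¹ * b) := by group
    rw [this, mul_smul, hscal _ hab]
  -- the spread indexed by the quotient
  set Q := Fˣ ⧸ H with hQ
  set g : Q → Submodule K F := fun q => Quotient.liftOn' q (fun v => v • W) hconst with hg
  have hgmk : ∀ v : Fˣ, g (QuotientGroup.mk v) = v • W := fun v => rfl
  have hgrk : ∀ q, Module.finrank K (g q) = t := by
    intro q
    induction q using Quotient.inductionOn'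
    exact frk _
  -- the count
  have hcount : ∀ x : F, x ≠ 0 → Nat.card {q : Q // x ∈ g q} = (p ^ t - 1) / (p - 1) := by
    intro x hx
    have hA : Nat.card {v : Fˣ // x ∈ g (QuotientGroup.mk v)} = p ^ t - 1 := by
      have e : {v : Fˣ // x ∈ g (QuotientGroup.mk v)} ≃ {w : W // w ≠ 0} := by
        refine
          { toFun := fun v => ⟨⟨(v : Fˣ)⁻¹.1 • x, by
              have := (memW v.1 x).mp (by simpa [hgmk] using v.2)
              simpa [Units.smul_def, smul_eq_mul] using this⟩, ?_⟩
            invFun := fun w => ⟨Units.mk0 (x * (w.1 : F)⁻¹)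
              (mul_ne_zero hx (inv_ne_zero (by simpa using w.2))), ?_⟩
            left_inv := ?_, right_inv := ?_ }
        · intro hzero
          apply hx
          have h0 : ((v : Fˣ)⁻¹.1 : F) • x = 0 := by
            simpa using congrArg Subtype.val hzero
          have := congrArg (fun y => ((v : Fˣ).1 : F) • y) h0
          simpa [smul_smul, Units.smul_def] using this
        · rw [hgmk, memW]
          have hw0 : (w.1 : F) ≠ 0 := by simpa using w.2
          have : ((Units.mk0 (x * (w.1 : F)⁻¹)
              (mul_ne_zero hx (inv_ne_zero hw0)))⁻¹ : Fˣ) • x = (w.1 : F) := by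
            simp [Units.smul_def]
            field_simp
          rw [this]
          exact w.1.2
        · intro v
          apply Subtype.ext
          apply Units.ext
          have hv0 : ((v : Fˣ) : F) ≠ 0 := Units.ne_zero _
          simp [Units.smul_def]
          field_simp
        · intro w
          apply Subtype.ext
          apply Subtype.ext
          have hw0 : (w.1 : F) ≠ 0 := by simpa using w.2
          simp [Units.smul_def]
          field_simp
      rw [Nat.card_congr e]
      have : Nat.card {w : W // w ≠ 0} = Nat.card W - 1 := by
        haveI : Fintype W := Fintype.ofFinite W
        simp [Nat.card_eq_fintype_card]
      rw [this, Nat.card_eq_fintype_card, Module.card_eq_pow_finrank (K := K) (V := W), hW, ← hp]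
    have hB := spread_quot_count H (fun q => x ∈ g q)
    rw [hA, cardH] at hB
    rw [← Nat.mul_div_cancel_left (Nat.card {q : Q // x ∈ g q}) (show 0 < p - 1 by omega), ← hB]
  -- reindex by Fin N
  have : Finite Q := Quotient.finite _
  refine ⟨Nat.card Q, fun i => g ((Finite.equivFin Q).symm i), fun i => hgrk _, fun x hx => ?_⟩
  rw [← hcount x hx]
  exact Nat.card_congr (Equiv.subtypeEquiv (Finite.equivFin Q).symm fun i => Iff.rfl)

/-- For t ≤ m there exists a (p^t-1)/(p-1)-fold spread of F_p^m by
    t-dimensional subspaces. -/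
theorem stmt_8 (p t m : ℕ) (K : Type) [Field K] [Fintype K] [DecidableEq K]
    (hK : Fintype.card K = p) (ht : 0 < t) (htm : t ≤ m) :
    ∃ (N : ℕ) (Y : Fin N → Submodule K (Fin m → K)),
      (∀ i, Module.finrank K (Y i) = t) ∧
      ∀ x : Fin m → K, x ≠ 0 →
        Nat.card {i : Fin N // x ∈ Y i} = (p ^ t - 1) / (p - 1) := by
  classical
  subst hK
  have hm : m ≠ 0 := by omega
  obtain ⟨F, _, _, _, hrank⟩ := spread_ext K m hm
  obtain ⟨N, Y, hY1, hY2⟩ := spread_core K F t ht (hrank ▸ htm)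
  -- transport along a linear equivalence
  haveI : Module.Finite K F := Module.Finite.of_finite
  let b : Module.Basis (Fin m) K F := (Module.finBasis K F).reindex (finCongr hrank)
  let e : F ≃ₗ[K] (Fin m → K) := b.equivFun
  refine ⟨N, fun i => (Y i).map (e : F →ₗ[K] (Fin m → K)), fun i => ?_, fun x hx => ?_⟩
  · rw [LinearEquiv.finrank_map_eq, hY1]
  · have hx' : e.symm x ≠ 0 := fun h => hx (by simpa using congrArg e h)
    rw [← hY2 (e.symm x) hx']
    apply Nat.card_congr
    exact Equiv.subtypeEquivRight fun i => by rw [Submodule.mem_map_equiv]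
end

section
/- Let t divide m + s, and suppose S_1, ..., S_n are t-dimensional subspaces of F_p^{m+s} whose nonzero vectors partition F_p^{m+s} \ {0} (a spread, so n = (p^{m+s}-1)/(p^t-1)). Let π : F_p^{m+s} → F_p^m be the projection forgetting the last s coordinates. Then (π(S_1), ..., π(S_n)), taken as multisets, is a (p^s - 1, p^s)-spread of t-multisubspaces of F_p^m. -/
/-- Projecting a spread of F_p^{m+s} by t-dimensional subspaces along the last s
    coordinates yields a (p^s - 1, p^s)-spread of t-multisubspaces of F_p^m. -/
theorem stmt_10 (p t m s n : ℕ) (K : Type) [Field K] [Fintype K] [DecidableEq K]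
    (hK : Fintype.card K = p) (ht : 0 < t) (hts : t ∣ m + s)
    (S : Fin n → Submodule K (Fin (m + s) → K))
    (hdim : ∀ i, Module.finrank K (S i) = t)
    (hpart : ∀ v : Fin (m + s) → K, v ≠ 0 → ∃! i, v ∈ S i)
    (hn : n = (p ^ (m + s) - 1) / (p ^ t - 1)) :
    ∀ u : Fin m → K,
      (∑ i, Nat.card {v : Fin (m + s) → K //
          v ∈ S i ∧ (fun j : Fin m => v (Fin.castAdd s j)) = u})
        = if u = 0 then n + (p ^ s - 1) else p ^ s := by
  classical
  intro u
  set F : Finset (Fin (m+s) → K) :=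
    Finset.univ.filter (fun v => (fun j : Fin m => v (Fin.castAdd s j)) = u) with hF
  -- the fiber has cardinality p^s
  have hFcard : F.card = p ^ s := by
    rw [show p ^ s = (Finset.univ : Finset (Fin s → K)).card by
      simp [Finset.card_univ, hK]]
    refine Finset.card_bij' (fun v _ => (fun j : Fin s => v (Fin.natAdd m j)))
      (fun w _ => Fin.append u w) ?_ ?_ ?_ ?_
    · intro v hv; exact Finset.mem_univ _
    · intro w hw
      simp only [hF, Finset.mem_filter, Finset.mem_univ, true_and]
      funext j
      rw [Fin.append_left]
    · intro v hv
      simp only [hF, Finset.mem_filter, Finset.mem_univ, true_and] at hv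
      funext i
      refine Fin.addCases (fun j => ?_) (fun j => ?_) i
      · show Fin.append u _ (Fin.castAdd s j) = _
        rw [Fin.append_left]; exact (congrFun hv j).symm
      · show Fin.append u _ (Fin.natAdd m j) = _
        rw [Fin.append_right]
    · intro w hw
      funext j
      show Fin.append u w (Fin.natAdd m j) = _
      rw [Fin.append_right]
  -- rewrite each Nat.card as a sum over the fiber
  have h1 : ∀ i : Fin n,
      Nat.card {v : Fin (m+s) → K // v ∈ S i ∧ (fun j : Fin m => v (Fin.castAdd s j)) = u}
      = ∑ v ∈ F, (if v ∈ S i then 1 else 0) := by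
    intro i
    rw [Nat.card_eq_fintype_card, Fintype.card_subtype, ← Finset.sum_filter,
      Finset.sum_const, smul_eq_mul, mul_one]
    congr 1
    rw [hF, Finset.filter_filter]
    apply Finset.filter_congr
    intro v _
    simp [and_comm]
  have h2 : (∑ i, Nat.card {v : Fin (m+s) → K //
      v ∈ S i ∧ (fun j : Fin m => v (Fin.castAdd s j)) = u})
      = ∑ v ∈ F, (Finset.univ.filter (fun i => v ∈ S i)).card := by
    simp_rw [h1]
    rw [Finset.sum_comm]
    congr 1
    funext v
    rw [← Finset.sum_filter, Finset.sum_const, smul_eq_mul, mul_one]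
  -- for nonzero v the inner count is 1
  have h3 : ∀ v : Fin (m+s) → K, v ≠ 0 →
      (Finset.univ.filter (fun i => v ∈ S i)).card = 1 := by
    intro v hv
    obtain ⟨i, hi, huniq⟩ := hpart v hv
    rw [Finset.card_eq_one]
    refine ⟨i, ?_⟩
    ext j
    simp only [Finset.mem_filter, Finset.mem_univ, true_and, Finset.mem_singleton]
    exact ⟨fun h => huniq j h, fun h => h ▸ hi⟩
  rw [h2]
  by_cases hu : u = 0
  · subst hu
    simp only [if_pos rfl]
    have h0F : (0 : Fin (m+s) → K) ∈ F := by
      simp [hF]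
      rfl
    rw [← Finset.add_sum_erase _ _ h0F]
    have hz : (Finset.univ.filter (fun i => (0 : Fin (m+s) → K) ∈ S i)).card = n := by
      rw [Finset.filter_true_of_mem (fun i _ => (S i).zero_mem)]
      simp
    rw [hz]
    congr 1
    rw [Finset.sum_congr rfl (fun v hv => h3 v (Finset.ne_of_mem_erase hv)),
      Finset.sum_const, smul_eq_mul, mul_one, Finset.card_erase_of_mem h0F, hFcard]
  · rw [if_neg hu]
    have : ∀ v ∈ F, (Finset.univ.filter (fun i => v ∈ S i)).card = 1 := by
      intro v hv
      apply h3
      intro h0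
      apply hu
      simp only [hF, Finset.mem_filter, Finset.mem_univ, true_and] at hv
      rw [← hv, h0]
      rfl
    rw [Finset.sum_congr rfl this, Finset.sum_const, smul_eq_mul, mul_one, hFcard]
end

section
/- Let p be a prime, q = p^t, and let M = M(T_1,...,T_n) be an m × nt matrix over F_p whose columns, grouped into n blocks T_1,...,T_n of t columns each, span F_p^m. Then the F_p-linear code C = ker M ⊆ F_p^{nt}, viewed as a code in H(n, p^t) by grouping coordinates into n blocks of length t, is completely regular with covering radius 1 and quotient matrix [[λ, n(q-1)-λ],[μ, n(q-1)-μ]] if and only if (⟨T_1⟩, ..., ⟨T_n⟩) is a (λ,μ)-spread of F_p^m. -/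
noncomputable def spanCount {K : Type} [Field K] {m t : ℕ} (T : Fin t → Fin m → K)
    (u : Fin m → K) : ℕ :=
  Nat.card {a : Fin t → K // ∑ j, a j • T j = u}

def IsMultispread {K : Type} [Field K] [DecidableEq K] {m t n : ℕ}
    (T : Fin n → Fin t → Fin m → K) (lam mu : ℕ) : Prop :=
  ∀ u : Fin m → K, (∑ i, spanCount (T i) u) = if u = 0 then n + lam else mu

/-- The syndrome M(T₁,…,Tₙ)·x of a vertex x of H(n,p^t), viewed as n blocks of
    t coordinates over F_p. -/
def synd {p t m n : ℕ} [Fact p.Prime] (T : Fin n → Fin t → Fin m → ZMod p)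
    (x : Fin n → Fin t → ZMod p) : Fin m → ZMod p :=
  ∑ i, ∑ j, x i j • T i j

section aux
variable {p t m n : ℕ} [Fact p.Prime] (T : Fin n → Fin t → Fin m → ZMod p)

lemma synd_add (x y : Fin n → Fin t → ZMod p) :
    synd T (x + y) = synd T x + synd T y := by
  simp [synd, add_smul, Finset.sum_add_distrib]

lemma synd_single (i : Fin n) (a : Fin t → ZMod p) :
    synd T (Pi.single i a) = ∑ j, a j • T i j := by
  unfold synd
  rw [Finset.sum_eq_single i]
  · simp
  · intro k _ hk
    simp [Pi.single_apply, hk]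
  · simp

set_option maxHeartbeats 1000000 in
lemma card_nbrs (x : Fin n → Fin t → ZMod p) :
    Nat.card {y : Fin n → Fin t → ZMod p //
        synd T y = 0 ∧ hammingDist x y = 1}
      = ∑ i, Nat.card {a : Fin t → ZMod p //
          a ≠ 0 ∧ ∑ j, a j • T i j = - synd T x} := by
  classical
  have hsingle : ∀ (i : Fin n) (a : Fin t → ZMod p), a ≠ 0 →
      hammingNorm (Pi.single i a : Fin n → Fin t → ZMod p) = 1 := by
    intro i a ha
    unfold hammingNorm
    rw [show (Finset.univ.filter fun k =>
        (Pi.single i a : Fin n → Fin t → ZMod p) k ≠ 0) = {i} by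
      ext k
      by_cases hk : k = i
      · subst hk; simp [ha]
      · simp [Pi.single_apply, hk]]
    exact Finset.card_singleton i
  have key : ∀ (i : Fin n) (a : Fin t → ZMod p), a ≠ 0 →
      hammingDist x (x + Pi.single i a) = 1 := by
    intro i a ha
    rw [hammingDist_eq_hammingNorm, neg_add_cancel_left]
    exact hsingle i a ha
  have e : (Σ i : Fin n, {a : Fin t → ZMod p //
          a ≠ 0 ∧ ∑ j, a j • T i j = - synd T x})
      ≃ {y : Fin n → Fin t → ZMod p // synd T y = 0 ∧ hammingDist x y = 1} := by
    refine Equiv.ofBijective (fun s => ⟨x + Pi.single s.1 s.2.1, ?_, key s.1 s.2.1 s.2.2.1⟩) ⟨?_, ?_⟩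
    · rw [synd_add, synd_single, s.2.2.2]; simp
    · rintro ⟨i, a, ha, hsa⟩ ⟨i', a', ha', hsa'⟩ h
      have h2 : (Pi.single i a : Fin n → Fin t → ZMod p) = Pi.single i' a' := by
        have := congrArg Subtype.val h
        simpa using this
      have hii : i = i' := by
        by_contra hii
        have := congrFun h2 i
        simp [Pi.single_apply, hii] at this
        exact ha this
      subst hii
      have haa : a = a' := by
        have := congrFun h2 i
        simpa using this
      subst haa
      rfl
    · rintro ⟨y, hy, hd⟩
      have hd' : (Finset.univ.filter fun k => x k ≠ y k).card = 1 := hd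
      obtain ⟨i, hi⟩ := Finset.card_eq_one.mp hd'
      have hmem : ∀ k, x k ≠ y k ↔ k = i := by
        intro k
        constructor
        · intro h
          have : k ∈ Finset.univ.filter fun k => x k ≠ y k := by simp [h]
          rw [hi] at this; simpa using this
        · intro hk
          have hmm : i ∈ Finset.univ.filter fun k => x k ≠ y k := by
            rw [hi]; exact Finset.mem_singleton_self i
          rw [hk]
          simpa using hmm
      set a : Fin t → ZMod p := y i - x i with hadef
      have ha : a ≠ 0 := sub_ne_zero_of_ne (Ne.symm ((hmem i).mpr rfl))
      have hy' : y = x + Pi.single i a := by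
        funext k
        by_cases hk : k = i
        · subst hk; simp [hadef]
        · have : x k = y k := by
            by_contra h; exact hk ((hmem k).mp h)
          simp [Pi.single_apply, hk, ← this]
      have hsa : ∑ j, a j • T i j = - synd T x := by
        have : synd T y = synd T x + ∑ j, a j • T i j := by
          rw [hy', synd_add, synd_single]
        rw [hy] at this
        linear_combination -this
      exact ⟨⟨i, a, ha, hsa⟩, Subtype.ext hy'.symm⟩
  rw [← Nat.card_congr e]
  simp [Nat.card_eq_fintype_card, Fintype.card_sigma]

lemma spanCount_ne (i : Fin n) (u : Fin m → ZMod p) (hu : u ≠ 0) :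
    Nat.card {a : Fin t → ZMod p // a ≠ 0 ∧ ∑ j, a j • T i j = u}
      = spanCount (T i) u := by
  unfold spanCount
  apply Nat.card_congr
  apply Equiv.subtypeEquivRight
  intro a
  constructor
  · exact fun h => h.2
  · intro h
    refine ⟨?_, h⟩
    rintro rfl
    apply hu
    rw [← h]; simp

lemma spanCount_zero (i : Fin n) :
    spanCount (T i) (0 : Fin m → ZMod p)
      = Nat.card {a : Fin t → ZMod p // a ≠ 0 ∧ ∑ j, a j • T i j = 0} + 1 := by
  classical
  unfold spanCount
  rw [Nat.card_eq_fintype_card, Nat.card_eq_fintype_card, Fintype.card_subtype,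
    Fintype.card_subtype]
  rw [show (Finset.univ.filter fun a : Fin t → ZMod p => ∑ j, a j • T i j = 0)
      = insert 0 (Finset.univ.filter fun a => a ≠ 0 ∧ ∑ j, a j • T i j = 0) by
    ext a
    by_cases ha : a = 0 <;> simp [ha]]
  rw [Finset.card_insert_of_notMem (by simp)]

lemma synd_surj (hspan : Submodule.span (ZMod p)
      (Set.range fun ij : Fin n × Fin t => T ij.1 ij.2) = ⊤) (u : Fin m → ZMod p) :
    ∃ x, synd T x = u := by
  have : u ∈ Submodule.span (ZMod p)
      (Set.range fun ij : Fin n × Fin t => T ij.1 ij.2) := by rw [hspan]; trivial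
  obtain ⟨c, hc⟩ := (Submodule.mem_span_range_iff_exists_fun (ZMod p)).mp this
  refine ⟨fun i j => c (i, j), ?_⟩
  rw [← hc, synd]
  exact (Fintype.sum_prod_type (fun ij : Fin n × Fin t => c ij • T ij.1 ij.2)).symm

end aux


/-- ker M(T₁,…,Tₙ) is completely regular of covering radius 1 with quotient
    matrix [[λ, n(q-1)-λ],[μ, n(q-1)-μ]] iff (⟨T₁⟩,…,⟨Tₙ⟩) is a (λ,μ)-spread.
    (Vertices are adjacent iff they differ in exactly one block.) -/
theorem stmt_12 (p t m n lam mu : ℕ) [hp : Fact p.Prime] (ht : 0 < t)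
    (T : Fin n → Fin t → Fin m → ZMod p)
    (hspan : Submodule.span (ZMod p)
        (Set.range fun ij : Fin n × Fin t => T ij.1 ij.2) = ⊤) :
    ((∀ x : Fin n → Fin t → ZMod p, synd T x = 0 →
        Nat.card {y : Fin n → Fin t → ZMod p //
          synd T y = 0 ∧ hammingDist x y = 1} = lam) ∧
     (∀ x : Fin n → Fin t → ZMod p, synd T x ≠ 0 →
        Nat.card {y : Fin n → Fin t → ZMod p //
          synd T y = 0 ∧ hammingDist x y = 1} = mu))
    ↔ IsMultispread T lam mu := by
  constructor
  · rintro ⟨h0, h1⟩ u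
    by_cases hu : u = 0
    · subst hu
      have hx0 : synd T (0 : Fin n → Fin t → ZMod p) = 0 := by simp [synd]
      have hl := h0 0 hx0
      rw [card_nbrs, hx0] at hl
      simp only [neg_zero] at hl
      have hcalc : ∑ i, spanCount (T i) (0 : Fin m → ZMod p) = n + lam := by
        calc ∑ i, spanCount (T i) (0 : Fin m → ZMod p)
            = ∑ i, (Nat.card {a : Fin t → ZMod p //
                a ≠ 0 ∧ ∑ j, a j • T i j = 0} + 1) :=
              Finset.sum_congr rfl fun i _ => spanCount_zero T i
          _ = (∑ i, Nat.card {a : Fin t → ZMod p //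
                a ≠ 0 ∧ ∑ j, a j • T i j = 0}) + n := by
              rw [Finset.sum_add_distrib]; simp
          _ = lam + n := by rw [hl]
          _ = n + lam := Nat.add_comm _ _
      simpa using hcalc
    · obtain ⟨x, hx⟩ := synd_surj T hspan (-u)
      have hxne : synd T x ≠ 0 := by
        rw [hx]; simpa using hu
      have hl := h1 x hxne
      rw [card_nbrs, hx, neg_neg] at hl
      have hm : ∑ i, spanCount (T i) u = mu := by
        rw [← hl]
        exact Finset.sum_congr rfl fun i _ => (spanCount_ne T i u hu).symm
      simpa [hu] using hm
  · intro hms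
    constructor
    · intro x hx
      rw [card_nbrs, hx]
      simp only [neg_zero]
      have this' : ∑ i, spanCount (T i) (0 : Fin m → ZMod p) = n + lam := by
        simpa using hms 0
      have h2 : ∑ i, (Nat.card {a : Fin t → ZMod p //
          a ≠ 0 ∧ ∑ j, a j • T i j = 0} + 1) = n + lam := by
        rw [← this']
        exact Finset.sum_congr rfl fun i _ => (spanCount_zero T i).symm
      rw [Finset.sum_add_distrib] at h2
      simp only [Finset.sum_const, Finset.card_univ, Fintype.card_fin, smul_eq_mul,
        mul_one] at h2
      exact Nat.add_right_cancel (h2.trans (Nat.add_comm n lam))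
    · intro x hx
      rw [card_nbrs]
      have hu : -synd T x ≠ 0 := by simpa using hx
      have this' : ∑ i, spanCount (T i) (-synd T x) = mu := by
        simpa [hu] using hms (-synd T x)
      rw [← this']
      exact Finset.sum_congr rfl fun i _ => spanCount_ne T i _ hu
end

section
/- Let q = p^t with p prime, and suppose (⟨T_1⟩,...,⟨T_n⟩) is a (μ-1, μ)-spread of t-multisubspaces of F_p^m whose underlying vectors span F_p^m. Then ker M(T_1,...,T_n) is an F_p-linear μ-fold 1-perfect code in H(n, q): every radius-1 ball in H(n,q) contains exactly μ codewords. -/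
lemma synd_update {p t m n : ℕ} [Fact p.Prime] (T : Fin n → Fin t → Fin m → ZMod p)
    (x : Fin n → Fin t → ZMod p) (i : Fin n) (v : Fin t → ZMod p) :
    synd T (Function.update x i v)
      = synd T x - (∑ j, x i j • T i j) + ∑ j, v j • T i j := by
  classical
  unfold synd
  rw [← Finset.add_sum_erase Finset.univ
        (fun i' => ∑ j, Function.update x i v i' j • T i' j) (Finset.mem_univ i),
      ← Finset.add_sum_erase Finset.univ
        (fun i' => ∑ j, x i' j • T i' j) (Finset.mem_univ i)]
  have h1 : ∀ i' ∈ Finset.univ.erase i,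
      (∑ j, Function.update x i v i' j • T i' j) = ∑ j, x i' j • T i' j := by
    intro i' hi'
    rw [Function.update_of_ne (Finset.ne_of_mem_erase hi')]
  rw [Finset.sum_congr rfl h1, Function.update_self]
  abel

lemma spanCount_eq_card {p m t : ℕ} [Fact p.Prime] (T : Fin t → Fin m → ZMod p)
    (u : Fin m → ZMod p) :
    spanCount T u
      = (Finset.univ.filter (fun a : Fin t → ZMod p => ∑ j, a j • T j = u)).card := by
  classical
  rw [spanCount, Nat.card_eq_fintype_card, Fintype.card_subtype]

/-- If (⟨T₁⟩,…,⟨Tₙ⟩) is a (μ-1,μ)-spread whose vectors span F_p^m, then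
    ker M(T₁,…,Tₙ) is a μ-fold 1-perfect code in H(n,p^t): every radius-1 ball
    contains exactly μ codewords. -/
theorem stmt_13 (p t m n μ : ℕ) [hp : Fact p.Prime] (ht : 0 < t)
    (T : Fin n → Fin t → Fin m → ZMod p)
    (hspan : Submodule.span (ZMod p)
        (Set.range fun ij : Fin n × Fin t => T ij.1 ij.2) = ⊤)
    (hms : IsMultispread T (μ - 1) μ) (hμ : 1 ≤ μ) :
    ∀ x : Fin n → Fin t → ZMod p,
      Nat.card {y : Fin n → Fin t → ZMod p //
        synd T y = 0 ∧ hammingDist x y ≤ 1} = μ := by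
  classical
  intro x
  set s := synd T x with hs
  set ε : ℕ := if s = 0 then 1 else 0 with hε
  rw [Nat.card_eq_fintype_card, Fintype.card_subtype]
  -- The per-block fibers
  set A : Fin n → Finset (Fin t → ZMod p) :=
    fun i => Finset.univ.filter (fun a => a ≠ 0 ∧ ∑ j, a j • T i j = -s) with hA
  -- per-block count
  have hAcard : ∀ i : Fin n, (A i).card + ε = spanCount (T i) (-s) := by
    intro i
    rw [spanCount_eq_card]
    have hsplit := Finset.card_filter_add_card_filter_not
      (s := Finset.univ.filter (fun a : Fin t → ZMod p => ∑ j, a j • T i j = -s))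
      (p := fun a => a ≠ 0)
    rw [Finset.filter_filter, Finset.filter_filter] at hsplit
    have h1 : (Finset.univ.filter
        (fun a : Fin t → ZMod p => (∑ j, a j • T i j = -s) ∧ a ≠ 0)) = A i := by
      rw [hA]; apply Finset.filter_congr; intro a _; tauto
    have h2 : (Finset.univ.filter
        (fun a : Fin t → ZMod p => (∑ j, a j • T i j = -s) ∧ ¬a ≠ 0))
        = if s = 0 then {0} else ∅ := by
      ext a
      simp only [Finset.mem_filter, Finset.mem_univ, true_and, not_not]
      constructor
      · rintro ⟨hsum, rfl⟩
        have : (0 : Fin m → ZMod p) = -s := by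
          simpa using hsum
        have hs0 : s = 0 := by
          have := congrArg Neg.neg this; simpa using this.symm
        simp [hs0]
      · intro ha
        by_cases hs0 : s = 0
        · simp [hs0] at ha
          subst ha
          simp [hs0]
        · simp [hs0] at ha
    rw [h1, h2] at hsplit
    rw [← hsplit]
    congr 1
    by_cases hs0 : s = 0 <;> simp [hε, hs0]
  -- the ball ∩ code as a finset
  have hball : (Finset.univ.filter
      (fun y : Fin n → Fin t → ZMod p => synd T y = 0 ∧ hammingDist x y ≤ 1))
      = (if s = 0 then {x} else ∅)
        ∪ Finset.univ.biUnion (fun i : Fin n =>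
            (A i).image (fun a => Function.update x i (fun j => x i j + a j))) := by
    ext y
    simp only [Finset.mem_filter, Finset.mem_univ, true_and, Finset.mem_union,
      Finset.mem_biUnion, Finset.mem_image]
    constructor
    · rintro ⟨hy0, hyd⟩
      by_cases hyx : y = x
      · left
        subst hyx
        rw [← hs] at hy0
        simp [hy0]
      · right
        -- y differs from x in exactly one block
        have hne : (Finset.univ.filter (fun i : Fin n => x i ≠ y i)).Nonempty := by
          by_contra h
          rw [Finset.not_nonempty_iff_eq_empty, Finset.filter_eq_empty_iff] at h
          apply hyx
          funext i; exact ((not_not.mp (h (Finset.mem_univ i)))).symm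
        have hcard : (Finset.univ.filter (fun i : Fin n => x i ≠ y i)).card = 1 := by
          have h1 : 1 ≤ (Finset.univ.filter (fun i : Fin n => x i ≠ y i)).card :=
            Finset.Nonempty.card_pos hne
          have h2 : (Finset.univ.filter (fun i : Fin n => x i ≠ y i)).card ≤ 1 := hyd
          omega
        obtain ⟨i, hi⟩ := Finset.card_eq_one.mp hcard
        have hmemi : ∀ k : Fin n, x k ≠ y k ↔ k = i := by
          intro k
          constructor
          · intro hk
            have : k ∈ Finset.univ.filter (fun i : Fin n => x i ≠ y i) := by
              simp [hk]
            rw [hi] at this; simpa using this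
          · intro hk
            rw [hk]
            have : i ∈ Finset.univ.filter (fun i : Fin n => x i ≠ y i) := by
              rw [hi]; simp
            simpa using this
        refine ⟨i, fun j => y i j - x i j, ?_, ?_⟩
        · simp only [hA, Finset.mem_filter, Finset.mem_univ, true_and]
          constructor
          · intro h0
            apply (hmemi i).mpr rfl
            funext j
            have := congrFun h0 j
            simp only [Pi.zero_apply] at this
            have : y i j = x i j := by
              have := sub_eq_zero.mp this; exact this
            exact this.symm
          · -- syndrome condition
            have hyu : y = Function.update x i (fun j => x i j + (y i j - x i j)) := by
              funext k
              by_cases hk : k = i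
              · subst hk
                rw [Function.update_self]
                funext j; ring
              · rw [Function.update_of_ne hk]
                exact not_not.mp (fun h => hk ((hmemi k).mp (fun he => h he.symm)))
            have := synd_update T x i (fun j => x i j + (y i j - x i j))
            rw [← hyu, hy0, ← hs] at this
            have hexp : (∑ j, (x i j + (y i j - x i j)) • T i j)
                = (∑ j, x i j • T i j) + ∑ j, (y i j - x i j) • T i j := by
              rw [← Finset.sum_add_distrib]
              apply Finset.sum_congr rfl
              intro j _
              rw [add_smul]
            rw [hexp] at this
            have : 0 = s + ∑ j, (y i j - x i j) • T i j := by
              rw [this]; abel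
            have := this.symm
            linear_combination (norm := abel) this
        · funext k
          by_cases hk : k = i
          · subst hk
            rw [Function.update_self]
            funext j; ring
          · rw [Function.update_of_ne hk]
            exact not_not.mp (fun h => hk ((hmemi k).mp h))
    · intro h
      rcases h with h | ⟨i, a, ha, rfl⟩
      · by_cases hs0 : s = 0
        · simp [hs0] at h
          subst h
          exact ⟨by rw [← hs]; exact hs0, by simp [hammingDist]⟩
        · simp [hs0] at h
      · simp only [hA, Finset.mem_filter, Finset.mem_univ, true_and] at ha
        obtain ⟨ha0, hasum⟩ := ha
        constructor
        · rw [synd_update, ← hs]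
          have hexp : (∑ j, (x i j + a j) • T i j)
              = (∑ j, x i j • T i j) + ∑ j, a j • T i j := by
            rw [← Finset.sum_add_distrib]
            apply Finset.sum_congr rfl
            intro j _
            rw [add_smul]
          rw [hexp, hasum]
          abel
        · calc hammingDist x (Function.update x i fun j => x i j + a j)
              = (Finset.univ.filter (fun k : Fin n =>
                  x k ≠ Function.update x i (fun j => x i j + a j) k)).card := rfl
            _ ≤ ({i} : Finset (Fin n)).card := by
                apply Finset.card_le_card
                intro k hk
                simp only [Finset.mem_filter, Finset.mem_univ, true_and] at hk
                simp only [Finset.mem_singleton]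
                by_contra hki
                exact hk (by rw [Function.update_of_ne hki])
            _ = 1 := Finset.card_singleton i
  rw [hball]
  -- disjointness and cardinalities
  have hdisj : Disjoint (if s = 0 then ({x} : Finset (Fin n → Fin t → ZMod p)) else ∅)
      (Finset.univ.biUnion (fun i : Fin n =>
        (A i).image (fun a => Function.update x i (fun j => x i j + a j)))) := by
    rw [Finset.disjoint_left]
    intro y hy hy2
    by_cases hs0 : s = 0
    · rw [if_pos hs0, Finset.mem_singleton] at hy
      simp only [Finset.mem_biUnion, Finset.mem_univ, true_and, Finset.mem_image] at hy2
      obtain ⟨i, a, ha, hupd⟩ := hy2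
      rw [hy] at hupd
      simp only [hA, Finset.mem_filter, Finset.mem_univ, true_and] at ha
      apply ha.1
      funext j
      have h3 := congrFun (congrFun hupd i) j
      rw [Function.update_self] at h3
      have h4 : a j = 0 := by
        have h5 : x i j + a j = x i j := h3
        simpa using h5
      simpa using h4
    · rw [if_neg hs0] at hy
      simp at hy
  have hpd : ∀ i₁ ∈ (Finset.univ : Finset (Fin n)), ∀ i₂ ∈ (Finset.univ : Finset (Fin n)),
      i₁ ≠ i₂ → Disjoint
        ((A i₁).image (fun a => Function.update x i₁ (fun j => x i₁ j + a j)))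
        ((A i₂).image (fun a => Function.update x i₂ (fun j => x i₂ j + a j))) := by
    intro i₁ _ i₂ _ h12
    rw [Finset.disjoint_left]
    intro y hy1 hy2
    simp only [Finset.mem_image] at hy1 hy2
    obtain ⟨a, ha, rfl⟩ := hy1
    obtain ⟨b, hb, hupd⟩ := hy2
    simp only [hA, Finset.mem_filter, Finset.mem_univ, true_and] at ha
    apply ha.1
    funext j
    have h3 := congrFun (congrFun hupd i₁) j
    simp only [Function.update_self, Function.update_of_ne h12] at h3
    have h4 : a j = 0 := by
      have : x i₁ j = x i₁ j + a j := h3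
      exact (left_eq_add.mp this)
    simpa using h4
  rw [Finset.card_union_of_disjoint hdisj, Finset.card_biUnion hpd]
  have himg : ∀ i : Fin n,
      ((A i).image (fun a => Function.update x i (fun j => x i j + a j))).card
        = (A i).card := by
    intro i
    apply Finset.card_image_of_injective
    intro a b hab
    funext j
    have h3 := congrFun (congrFun hab i) j
    simp only [Function.update_self] at h3
    have : x i j + a j = x i j + b j := h3
    exact add_left_cancel this
  have hfirst : (if s = 0 then ({x} : Finset (Fin n → Fin t → ZMod p)) else ∅).card = ε := by
    by_cases hs0 : s = 0 <;> simp [hε, hs0]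
  rw [hfirst]
  have hsum : ∑ i, ((A i).image (fun a => Function.update x i (fun j => x i j + a j))).card
      = ∑ i, (A i).card := Finset.sum_congr rfl (fun i _ => himg i)
  rw [hsum]
  -- now use the multispread hypothesis
  have hkey : ∑ i, spanCount (T i) (-s) = (∑ i, (A i).card) + n * ε := by
    rw [show (∑ i, spanCount (T i) (-s)) = ∑ i, ((A i).card + ε) from
      Finset.sum_congr rfl (fun i _ => (hAcard i).symm), Finset.sum_add_distrib,
      Finset.sum_const, Finset.card_univ, Fintype.card_fin, smul_eq_mul]
  have hmsv := hms (-s)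
  obtain ⟨S, hSdef⟩ : ∃ S : ℕ, ∑ i : Fin n, (A i).card = S := ⟨_, rfl⟩
  rw [hSdef] at hkey ⊢
  by_cases hs0 : s = 0
  · have hns : (-s : Fin m → ZMod p) = 0 := by rw [hs0]; simp
    rw [if_pos hns] at hmsv
    rw [hmsv] at hkey
    simp only [hε, if_pos hs0, mul_one] at hkey ⊢
    clear * - hkey hμ
    omega
  · have hns : (-s : Fin m → ZMod p) ≠ 0 := by
      intro h
      apply hs0
      have := congrArg Neg.neg h
      simpa using this
    rw [if_neg hns] at hmsv
    rw [hmsv] at hkey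
    simp only [hε, if_neg hs0, mul_zero, add_zero] at hkey ⊢
    clear * - hkey
    omega
end

section
/- Let q = p^t with p prime, and suppose n ≡ 1 (mod q), μ·q^n/((q-1)n+1) = p^k for some integer 0 ≤ k < nt, and μ ≥ 1. Set m = nt - k. Then there exists a (μ-1, μ)-spread of t-multisubspaces of F_p^m, and hence an F_p-linear (additive, when t > 1) μ-fold 1-perfect code in H(n,q). -/
open Finset

variable {p : ℕ} [Fact p.Prime]

noncomputable def fib {t m : ℕ} (L : (Fin t → ZMod p) →ₗ[ZMod p] (Fin m → ZMod p))
    (u : Fin m → ZMod p) : ℕ := Nat.card {a : Fin t → ZMod p // L a = u}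

lemma sum_single_smul {t m : ℕ} (L : (Fin t → ZMod p) →ₗ[ZMod p] (Fin m → ZMod p))
    (a : Fin t → ZMod p) : ∑ j, a j • L (Pi.single j 1) = L a := by
  have h : ∀ j, a j • L (Pi.single j 1) = L (Pi.single j (a j)) := by
    intro j
    rw [← map_smul]
    congr 1
    ext x
    simp [Pi.single_apply, mul_comm]
  rw [Finset.sum_congr rfl fun j _ => h j, ← map_sum]
  congr 1
  exact Finset.univ_sum_single a

lemma spanCount_of_linear {t m : ℕ} (L : (Fin t → ZMod p) →ₗ[ZMod p] (Fin m → ZMod p))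
    (u : Fin m → ZMod p) :
    spanCount (fun j => L (Pi.single j 1)) u = fib L u := by
  apply Nat.card_congr
  apply Equiv.subtypeEquivRight
  intro a
  rw [sum_single_smul]

lemma synd_of_linear {t m n : ℕ} (L : Fin n → ((Fin t → ZMod p) →ₗ[ZMod p] (Fin m → ZMod p)))
    (y : Fin n → Fin t → ZMod p) :
    synd (fun i j => L i (Pi.single j 1)) y = ∑ i, L i (y i) := by
  unfold synd
  exact Finset.sum_congr rfl fun i _ => sum_single_smul (L i) (y i)

lemma fib_eq_card {t m : ℕ} (L : (Fin t → ZMod p) →ₗ[ZMod p] (Fin m → ZMod p))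
    (u : Fin m → ZMod p) :
    fib L u = (univ.filter fun a : Fin t → ZMod p => L a = u).card := by
  rw [fib, Nat.card_eq_fintype_card, Fintype.card_subtype]

lemma code_count {t m n mu : ℕ} (hmu : 0 < mu)
    (L : Fin n → ((Fin t → ZMod p) →ₗ[ZMod p] (Fin m → ZMod p)))
    (hL : ∀ u, ∑ i, fib (L i) u = if u = 0 then n + (mu - 1) else mu)
    (x : Fin n → Fin t → ZMod p) :
    Nat.card {y : Fin n → Fin t → ZMod p //
      (∑ i, L i (y i)) = 0 ∧ hammingDist x y ≤ 1} = mu := by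
  classical
  set s : Fin m → ZMod p := ∑ i, L i (x i) with hs
  have hupd : ∀ (i : Fin n) (a : Fin t → ZMod p),
      (∑ j, L j (Function.update x i (x i + a) j)) = s + L i a := by
    intro i a
    rw [← Finset.sum_erase_add _ _ (mem_univ i), hs, ← Finset.sum_erase_add _ _ (mem_univ i)]
    have h1 : ∀ j ∈ univ.erase i, L j (Function.update x i (x i + a) j) = L j (x j) := by
      intro j hj
      rw [Function.update_of_ne (Finset.ne_of_mem_erase hj)]
    rw [Finset.sum_congr rfl h1, Function.update_self, map_add]
    abel
  set B := univ.filter (fun y : Fin n → Fin t → ZMod p =>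
      (∑ i, L i (y i)) = 0 ∧ hammingDist x y ≤ 1) with hB
  set Ai := fun i : Fin n => univ.filter (fun a : Fin t → ZMod p => L i a = -s ∧ ¬ a = 0) with hAi
  set A := univ.filter (fun ia : Fin n × (Fin t → ZMod p) =>
      L ia.1 ia.2 = -s ∧ ¬ ia.2 = 0) with hA
  have hxB : x ∈ B ↔ s = 0 := by
    simp [hB, hammingDist_self, hs]
  have hsplit := Finset.card_filter_add_card_filter_not (s := B)
    (p := fun y => y = x)
  have hBx : (B.filter fun y => y = x).card = if s = 0 then 1 else 0 := by
    rw [Finset.filter_eq']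
    by_cases hxb : x ∈ B
    · rw [if_pos hxb, if_pos (hxB.mp hxb), Finset.card_singleton]
    · rw [if_neg hxb, if_neg (fun h0 => hxb (hxB.mpr h0)), Finset.card_empty]
  have hbij : A.card = (B.filter fun y => ¬ y = x).card := by
    apply Finset.card_bij (fun ia _ => Function.update x ia.1 (x ia.1 + ia.2))
    · rintro ⟨i, a⟩ hia
      rw [hA, Finset.mem_filter] at hia
      obtain ⟨-, hLa, ha⟩ := hia
      rw [Finset.mem_filter, Finset.mem_filter]
      refine ⟨⟨mem_univ _, ?_, ?_⟩, ?_⟩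
      · rw [hupd i a, hLa, add_neg_cancel]
      · have hsub : (univ.filter fun j => x j ≠ Function.update x i (x i + a) j) ⊆ {i} := by
          intro j hj
          rw [Finset.mem_filter] at hj
          rw [Finset.mem_singleton]
          by_contra hji
          exact hj.2 (by rw [Function.update_of_ne hji])
        calc hammingDist x (Function.update x i (x i + a))
            = (univ.filter fun j => x j ≠ Function.update x i (x i + a) j).card := rfl
          _ ≤ ({i} : Finset (Fin n)).card := Finset.card_le_card hsub
          _ = 1 := Finset.card_singleton i
      · intro hcon
        have h2 := congrFun hcon i
        rw [Function.update_self] at h2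
        exact ha (add_eq_left.mp h2)
    · rintro ⟨i, a⟩ hia ⟨i', a'⟩ hia' heq
      rw [hA, Finset.mem_filter] at hia hia'
      dsimp only at heq hia hia'
      by_cases hii : i = i'
      · subst hii
        have h2 := congrFun heq i
        rw [Function.update_self, Function.update_self] at h2
        exact Prod.ext rfl (add_left_cancel h2)
      · exfalso
        have h2 := congrFun heq i
        rw [Function.update_self, Function.update_of_ne hii] at h2
        exact hia.2.2 (add_eq_left.mp h2)
    · intro y hy
      rw [Finset.mem_filter, hB, Finset.mem_filter] at hy
      obtain ⟨⟨-, hy0, hyd⟩, hyx⟩ := hy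
      obtain ⟨i, hi⟩ := Function.ne_iff.mp hyx
      have hfil : (univ.filter fun j => x j ≠ y j) = {i} := by
        apply Finset.eq_singleton_iff_unique_mem.mpr
        constructor
        · exact Finset.mem_filter.mpr ⟨mem_univ _, Ne.symm hi⟩
        · intro j hj
          by_contra hji
          have h2 : ({j, i} : Finset (Fin n)) ⊆ univ.filter fun j => x j ≠ y j := by
            intro l hl
            rcases Finset.mem_insert.mp hl with h | h
            · exact h ▸ hj
            · rw [Finset.mem_singleton] at h
              exact h ▸ Finset.mem_filter.mpr ⟨mem_univ _, Ne.symm hi⟩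
          have h3 : 2 ≤ hammingDist x y := by
            calc 2 = ({j, i} : Finset (Fin n)).card := by
                  rw [Finset.card_insert_of_notMem (by simpa using hji), Finset.card_singleton]
              _ ≤ _ := Finset.card_le_card h2
          omega
      have hyeq : y = Function.update x i (x i + (y i - x i)) := by
        funext j
        by_cases hji : j = i
        · subst hji
          rw [Function.update_self]
          ring
        · rw [Function.update_of_ne hji]
          by_contra hne
          have : j ∈ (univ.filter fun l => x l ≠ y l) := Finset.mem_filter.mpr ⟨mem_univ _, fun h => hne h.symm⟩
          rw [hfil, Finset.mem_singleton] at this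
          exact hji this
      refine ⟨⟨i, y i - x i⟩, ?_, hyeq.symm⟩
      rw [hA, Finset.mem_filter]
      refine ⟨mem_univ _, ?_, sub_ne_zero.mpr hi⟩
      have h4 := hupd i (y i - x i)
      rw [← hyeq, hy0] at h4
      exact eq_neg_of_add_eq_zero_right h4.symm
  have hAcard : A.card = ∑ i, (Ai i).card := by
    rw [hA, Finset.card_filter, Fintype.sum_prod_type]
    exact Finset.sum_congr rfl fun i _ => by rw [hAi, Finset.card_filter]
  have hAifib : ∀ i, (Ai i).card + (if s = 0 then 1 else 0) = fib (L i) (-s) := by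
    intro i
    rw [fib_eq_card]
    have h5 := Finset.card_filter_add_card_filter_not
      (s := univ.filter fun a : Fin t → ZMod p => L i a = -s) (p := fun a => a = 0)
    rw [Finset.filter_filter, Finset.filter_filter] at h5
    have h6 : (univ.filter fun a : Fin t → ZMod p => L i a = -s ∧ a = 0).card
        = if s = 0 then 1 else 0 := by
      by_cases hs0 : s = 0
      · rw [if_pos hs0]
        have : (univ.filter fun a : Fin t → ZMod p => L i a = -s ∧ a = 0) = {0} := by
          ext a
          simp only [Finset.mem_filter, Finset.mem_singleton, mem_univ, true_and]
          constructor
          · rintro ⟨-, h⟩; exact h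
          · rintro rfl; exact ⟨by rw [hs0, neg_zero, map_zero], rfl⟩
        rw [this, Finset.card_singleton]
      · rw [if_neg hs0]
        rw [Finset.card_eq_zero]
        ext a
        simp only [Finset.mem_filter, Finset.notMem_empty, iff_false, not_and, mem_univ, true_and]
        rintro h1 rfl
        rw [map_zero] at h1
        exact hs0 (neg_eq_zero.mp h1.symm)
    have h8 : Ai i = filter (fun a => (L i) a = -s ∧ ¬a = 0) univ := rfl
    rw [h8, ← h6]
    omega
  have hsum := hL (-s)
  have hsum2 : ∑ i, (fib (L i) (-s)) = ∑ i, ((Ai i).card + (if s = 0 then 1 else 0)) :=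
    Finset.sum_congr rfl fun i _ => (hAifib i).symm
  rw [Nat.card_eq_fintype_card, Fintype.card_subtype]
  have hBc : (univ.filter fun y : Fin n → Fin t → ZMod p =>
      (∑ i, L i (y i)) = 0 ∧ hammingDist x y ≤ 1).card = B.card := rfl
  rw [hBc]
  rw [Finset.sum_add_distrib, Finset.sum_const, Finset.card_univ, Fintype.card_fin, smul_eq_mul] at hsum2
  have hfinal : (if s = 0 then 1 else 0) + ∑ i, (Ai i).card = B.card := by
    rw [← hBx, ← hAcard, hbij]
    exact hsplit
  rw [← hfinal]
  by_cases hs0 : s = 0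
  · rw [if_pos (show -s = 0 by rw [hs0, neg_zero])] at hsum
    rw [if_pos hs0] at hsum2
    rw [if_pos hs0]
    rw [hsum2] at hsum
    generalize hSA : (∑ i, (Ai i).card) = SA at hsum ⊢
    clear * - hsum hmu
    omega
  · rw [if_neg (fun h0 => hs0 (neg_eq_zero.mp h0))] at hsum
    rw [if_neg hs0] at hsum2
    rw [if_neg hs0]
    rw [hsum2] at hsum
    generalize hSA : (∑ i, (Ai i).card) = SA at hsum ⊢
    clear * - hsum hmu
    omega

open scoped Classical in
lemma fib_of_injective {t m : ℕ} (L : (Fin t → ZMod p) →ₗ[ZMod p] (Fin m → ZMod p))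
    (hL : Function.Injective L) (u : Fin m → ZMod p) :
    fib L u = if (∃ b, L b = u) then 1 else 0 := by
  by_cases h : ∃ b, L b = u
  · obtain ⟨b, hb⟩ := h
    rw [if_pos ⟨b, hb⟩, fib]
    haveI : Unique {a // L a = u} :=
      ⟨⟨⟨b, hb⟩⟩, fun a => Subtype.ext (hL (a.2.trans hb.symm))⟩
    exact Nat.card_unique
  · rw [if_neg h, fib]
    haveI : IsEmpty {a // L a = u} := ⟨fun a => h ⟨a.1, a.2⟩⟩
    exact Nat.card_of_isEmpty

lemma card_fun_zmod (k : ℕ) : Nat.card (Fin k → ZMod p) = p ^ k := by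
  rw [Nat.card_eq_fintype_card, Fintype.card_fun, ZMod.card, Fintype.card_fin]

lemma fib_zero {t m : ℕ} (u : Fin m → ZMod p) :
    fib (0 : (Fin t → ZMod p) →ₗ[ZMod p] (Fin m → ZMod p)) u
      = if u = 0 then p ^ t else 0 := by
  by_cases h : u = 0
  · rw [if_pos h, fib]
    rw [Nat.card_congr (Equiv.subtypeUnivEquiv (fun a => by simp [h]))]
    exact card_fun_zmod t
  · rw [if_neg h, fib]
    haveI : IsEmpty {a : Fin t → ZMod p //
        (0 : (Fin t → ZMod p) →ₗ[ZMod p] (Fin m → ZMod p)) a = u} :=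
      ⟨fun a => h (by simpa using a.2.symm)⟩
    exact Nat.card_of_isEmpty

def truncMap (p : ℕ) [Fact p.Prime] {m M : ℕ} (h : m ≤ M) :
    (Fin M → ZMod p) →ₗ[ZMod p] (Fin m → ZMod p) where
  toFun a := fun i => a (Fin.castLE h i)
  map_add' _ _ := rfl
  map_smul' _ _ := rfl

def extMap (p : ℕ) [Fact p.Prime] {t m : ℕ} (h : t ≤ m) :
    (Fin t → ZMod p) →ₗ[ZMod p] (Fin m → ZMod p) where
  toFun b := fun i => if h' : (i : ℕ) < t then b ⟨i, h'⟩ else 0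
  map_add' b c := by funext i; by_cases h' : (i : ℕ) < t <;> simp [h']
  map_smul' c b := by funext i; by_cases h' : (i : ℕ) < t <;> simp [h']

lemma extMap_injective {t m : ℕ} (h : t ≤ m) : Function.Injective (extMap p h) := by
  intro b c hbc
  funext j
  have h2 := congrFun hbc (Fin.castLE h j)
  have h3 : ((Fin.castLE h j : Fin m) : ℕ) < t := j.2
  simpa [extMap, h3] using h2

lemma fib_trunc {m M : ℕ} (h : m ≤ M) (u : Fin m → ZMod p) :
    fib (truncMap p h) u = p ^ (M - m) := by
  have hMm : m + (M - m) = M := Nat.add_sub_cancel' h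
  let e0 : Fin (m + (M - m)) ≃ Fin M := finCongr hMm
  let E : (Fin M → ZMod p) ≃ (Fin m → ZMod p) × (Fin (M - m) → ZMod p) :=
    (Equiv.arrowCongr e0.symm (Equiv.refl _)).trans
      ((Equiv.arrowCongr finSumFinEquiv (Equiv.refl _)).symm.trans
        (Equiv.sumArrowEquivProdArrow _ _ _))
  have hE : ∀ a, (E a).1 = truncMap p h a := by
    intro a
    funext i
    rfl
  rw [fib]
  rw [Nat.card_congr (Equiv.subtypeEquiv (q := fun z => z.1 = u) E (fun a => by rw [← hE a]))]
  have e4 : {z : (Fin m → ZMod p) × (Fin (M - m) → ZMod p) // z.1 = u}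
      ≃ (Fin (M - m) → ZMod p) :=
    ⟨fun z => z.1.2, fun b => ⟨(u, b), rfl⟩,
     fun z => by
       obtain ⟨⟨z1, z2⟩, hz⟩ := z
       exact Subtype.ext (Prod.ext hz.symm rfl),
     fun b => rfl⟩
  rw [Nat.card_congr e4]
  exact card_fun_zmod (M - m)

open scoped Classical in
lemma card_split_zero {γ : Type} [Fintype γ] [Zero γ] (P : γ → Prop) :
    Nat.card {c : γ // P c} = (if P 0 then 1 else 0) + Nat.card {c : γ // P c ∧ ¬ c = 0} := by
  classical
  rw [Nat.card_eq_fintype_card, Nat.card_eq_fintype_card, Fintype.card_subtype,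
    Fintype.card_subtype]
  have h := Finset.card_filter_add_card_filter_not (s := univ.filter P)
    (p := fun c => c = 0)
  rw [Finset.filter_filter, Finset.filter_filter] at h
  have h2 : (univ.filter fun c => P c ∧ c = 0).card = if P 0 then 1 else 0 := by
    by_cases hP : P 0
    · rw [if_pos hP]
      have : (univ.filter fun c : γ => P c ∧ c = 0) = {0} := by
        ext c
        simp only [Finset.mem_filter, mem_univ, true_and, Finset.mem_singleton]
        exact ⟨fun hc => hc.2, fun hc => by subst hc; exact ⟨hP, rfl⟩⟩
      rw [this, Finset.card_singleton]
    · rw [if_neg hP, Finset.card_eq_zero]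
      ext c
      simp only [Finset.mem_filter, Finset.notMem_empty, iff_false, not_and, mem_univ, true_and]
      rintro hc rfl
      exact hP hc
  have h' : (univ.filter fun c : γ => P c ∧ c = 0).card
      + (univ.filter fun c : γ => P c ∧ ¬ c = 0).card
      = (univ.filter fun c : γ => P c).card := h
  rw [← h', h2]

def lineSetoid (r : ℕ) (K : Type) [Field K] : Setoid {v : Fin r → K // v ≠ 0} where
  r v w := ∃ c : K, c • (v : Fin r → K) = w
  iseqv := by
    refine ⟨fun v => ⟨1, one_smul _ _⟩, ?_, ?_⟩
    · rintro v w ⟨c, hc⟩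
      have hc0 : c ≠ 0 := by
        rintro rfl
        rw [zero_smul] at hc
        exact w.2 hc.symm
      exact ⟨c⁻¹, by rw [← hc, smul_smul, inv_mul_cancel₀ hc0, one_smul]⟩
    · rintro u v w ⟨c, hc⟩ ⟨d, hd⟩
      exact ⟨d * c, by rw [← hd, ← hc, smul_smul]⟩

lemma smul_ne_zero' {r : ℕ} {K : Type} [Field K] {c : K} {v : Fin r → K}
    (hc : c ≠ 0) (hv : v ≠ 0) : c • v ≠ 0 := by
  intro h0
  apply hv
  funext j
  have := congrFun h0 j
  simp only [Pi.smul_apply, smul_eq_mul, Pi.zero_apply] at this ⊢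
  exact (mul_eq_zero.mp this).resolve_left hc

lemma smul_cancel' {r : ℕ} {K : Type} [Field K] {c c' : K} {v : Fin r → K}
    (hv : v ≠ 0) (h : c • v = c' • v) : c = c' := by
  obtain ⟨j, hj⟩ := Function.ne_iff.mp hv
  have := congrFun h j
  simp only [Pi.smul_apply, smul_eq_mul] at this
  simp only [Pi.zero_apply] at hj
  exact mul_right_cancel₀ hj this

lemma line_partition {K : Type} [Field K] [Fintype K] [DecidableEq K] (r : ℕ)
    [Fintype (Quotient (lineSetoid r K))]
    (P : (Fin r → K) → Prop) :
    ∑ q : Quotient (lineSetoid r K),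
      Nat.card {c : K // P (c • ((Quotient.out q : {v : Fin r → K // v ≠ 0}) : Fin r → K)) ∧ ¬ c = 0}
      = Nat.card {v : {v : Fin r → K // v ≠ 0} // P (v : Fin r → K)} := by
  classical
  rw [Nat.card_eq_fintype_card, Fintype.card_subtype]
  rw [Finset.card_eq_sum_card_fiberwise
    (f := fun v : {v : Fin r → K // v ≠ 0} => (⟦v⟧ : Quotient (lineSetoid r K)))
    (t := univ) (fun x _ => mem_univ _)]
  apply Finset.sum_congr rfl
  intro q _
  rw [Nat.card_eq_fintype_card, Fintype.card_subtype]
  apply Finset.card_bij (fun (c : K) hc =>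
    (⟨c • ((Quotient.out q : {v : Fin r → K // v ≠ 0}) : Fin r → K),
      smul_ne_zero' (Finset.mem_filter.mp hc).2.2 (Quotient.out q).2⟩ : {v : Fin r → K // v ≠ 0}))
  · intro c hc
    obtain ⟨-, hP, hc0⟩ := Finset.mem_filter.mp hc
    rw [Finset.mem_filter, Finset.mem_filter]
    refine ⟨⟨mem_univ _, hP⟩, ?_⟩
    calc (⟦_⟧ : Quotient (lineSetoid r K)) = ⟦Quotient.out q⟧ :=
          (Quotient.sound (⟨c, rfl⟩ : (lineSetoid r K).r (Quotient.out q) _)).symm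
      _ = q := Quotient.out_eq q
  · intro c hc c' hc' heq
    have := congrArg Subtype.val heq
    exact smul_cancel' (Quotient.out q).2 this
  · intro v hv
    rw [Finset.mem_filter, Finset.mem_filter] at hv
    obtain ⟨⟨-, hP⟩, hq⟩ := hv
    have hrel := Quotient.mk_out (s := lineSetoid r K) v
    rw [hq] at hrel
    obtain ⟨c, hc⟩ := hrel
    have hc0 : c ≠ 0 := by
      rintro rfl
      rw [zero_smul] at hc
      exact v.2 hc.symm
    refine ⟨c, ?_, Subtype.ext hc⟩
    rw [Finset.mem_filter]
    refine ⟨mem_univ _, ?_, hc0⟩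
    rw [hc]
    exact hP

noncomputable def epsEquiv (p : ℕ) [Fact p.Prime] (m : ℕ) (hm0 : m ≠ 0) :
    GaloisField p m ≃ₗ[ZMod p] (Fin m → ZMod p) :=
  ((Module.finBasis (ZMod p) (GaloisField p m)).reindex
    (finCongr (GaloisField.finrank p hm0))).equivFun

noncomputable def Amap (p : ℕ) [Fact p.Prime] {t m : ℕ} (hm0 : m ≠ 0) (htm : t ≤ m)
    (a : GaloisField p m) : (Fin t → ZMod p) →ₗ[ZMod p] (Fin m → ZMod p) :=
  (epsEquiv p m hm0).toLinearMap ∘ₗ (LinearMap.mulLeft (ZMod p) a) ∘ₗ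
    ((epsEquiv p m hm0).symm.toLinearMap ∘ₗ extMap p htm)

lemma Amap_apply (p : ℕ) [Fact p.Prime] {t m : ℕ} (hm0 : m ≠ 0) (htm : t ≤ m)
    (a : GaloisField p m) (b : Fin t → ZMod p) :
    Amap p hm0 htm a b
      = epsEquiv p m hm0 (a * (epsEquiv p m hm0).symm (extMap p htm b)) := rfl

lemma card_ne_zero_fun {t : ℕ} :
    (univ.filter fun b : Fin t → ZMod p => ¬ b = 0).card = p ^ t - 1 := by
  classical
  have : (univ.filter fun b : Fin t → ZMod p => ¬ b = 0) = univ.erase 0 := by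
    ext b
    simp [Finset.mem_erase, and_comm]
  rw [this, Finset.card_erase_of_mem (mem_univ _), card_univ, Fintype.card_fun,
    ZMod.card, Fintype.card_fin]

open scoped Classical in
lemma Asum {t m : ℕ} (hm0 : m ≠ 0) (htm : t ≤ m)
    [Fintype (GaloisField p m)] (u : Fin m → ZMod p) :
    ∑ a : {x : GaloisField p m // x ≠ 0}, fib (Amap p hm0 htm (a : GaloisField p m)) u
      = if u = 0 then p ^ m - 1 else p ^ t - 1 := by
  classical
  set ε := epsEquiv p m hm0 with hε
  set ψ : (Fin t → ZMod p) →ₗ[ZMod p] GaloisField p m := ε.symm.toLinearMap ∘ₗ extMap p htm with hψ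
  have hψinj : Function.Injective ψ := by
    intro b c hbc
    exact extMap_injective htm (ε.symm.injective hbc)
  have hAinj : ∀ a : {x : GaloisField p m // x ≠ 0}, Function.Injective (Amap p hm0 htm (a : GaloisField p m)) := by
    intro a b c hbc
    rw [Amap_apply, Amap_apply] at hbc
    exact hψinj (mul_left_cancel₀ a.2 (ε.injective hbc))
  have hfib : ∀ a : {x : GaloisField p m // x ≠ 0},
      fib (Amap p hm0 htm (a : GaloisField p m)) u = if (∃ b, Amap p hm0 htm (a : GaloisField p m) b = u) then 1 else 0 :=
    fun a => fib_of_injective _ (hAinj a) u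
  rw [Finset.sum_congr rfl (fun a _ => hfib a), ← Finset.card_filter]
  have hchar : ∀ a : {x : GaloisField p m // x ≠ 0},
      (∃ b, Amap p hm0 htm (a : GaloisField p m) b = u) ↔ ((a : GaloisField p m)⁻¹ * ε.symm u) ∈ Set.range ψ := by
    intro a
    constructor
    · rintro ⟨b, hb⟩
      refine ⟨b, ?_⟩
      rw [Amap_apply] at hb
      have h2 : (a : GaloisField p m) * ψ b = ε.symm u := by
        rw [← hb]
        exact (ε.symm_apply_apply _).symm
      rw [← h2, inv_mul_cancel_left₀ a.2]
    · rintro ⟨b, hb⟩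
      refine ⟨b, ?_⟩
      rw [Amap_apply]
      show ε ((a : GaloisField p m) * ψ b) = u
      rw [hb, mul_inv_cancel_left₀ a.2, ε.apply_symm_apply]
  rw [Finset.filter_congr (fun a _ => by rw [hchar a])]
  by_cases hu : u = 0
  · rw [if_pos hu]
    have hall : ∀ a : {x : GaloisField p m // x ≠ 0}, ((a : GaloisField p m)⁻¹ * ε.symm u) ∈ Set.range ψ := by
      intro a
      rw [hu, map_zero, mul_zero]
      exact ⟨0, map_zero ψ⟩
    rw [Finset.filter_true_of_mem (fun a _ => hall a), card_univ, ← Nat.card_eq_fintype_card]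
    rw [Nat.card_eq_fintype_card, Fintype.card_subtype]
    have h1 : (univ.filter fun x : GaloisField p m => ¬ x = 0) = univ.erase 0 := by
      ext x
      simp [Finset.mem_erase, and_comm]
    rw [h1, Finset.card_erase_of_mem (mem_univ _), card_univ, ← Nat.card_eq_fintype_card]
    rw [show Nat.card (GaloisField p m) = p ^ m from GaloisField.card p m hm0]
  · rw [if_neg hu]
    have hv : ε.symm u ≠ 0 := fun h0 => hu (by rw [← ε.apply_symm_apply u, h0, map_zero])
    have step1 : (univ.filter fun a : {x : GaloisField p m // x ≠ 0} => ((a : GaloisField p m)⁻¹ * ε.symm u) ∈ Set.range ψ).card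
        = (univ.filter fun w : {x : GaloisField p m // x ≠ 0} => (w : GaloisField p m) ∈ Set.range ψ).card := by
      apply Finset.card_bij (fun (a : {x : GaloisField p m // x ≠ 0}) ha =>
        (⟨(a : GaloisField p m)⁻¹ * ε.symm u, mul_ne_zero (inv_ne_zero a.2) hv⟩ : {x : GaloisField p m // x ≠ 0}))
      · intro a ha
        rw [Finset.mem_filter] at ha ⊢
        exact ⟨mem_univ _, ha.2⟩
      · intro a ha a' ha' heq
        have h2 := congrArg Subtype.val heq
        simp only at h2
        exact Subtype.ext (inv_injective (mul_right_cancel₀ hv h2))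
      · intro w hw
        rw [Finset.mem_filter] at hw
        refine ⟨⟨ε.symm u * (w : GaloisField p m)⁻¹, mul_ne_zero hv (inv_ne_zero w.2)⟩, ?_, ?_⟩
        · rw [Finset.mem_filter]
          refine ⟨mem_univ _, ?_⟩
          have : (ε.symm u * (w : GaloisField p m)⁻¹)⁻¹ * ε.symm u = (w : GaloisField p m) := by
            field_simp
          rw [this]
          exact hw.2
        · apply Subtype.ext
          show (ε.symm u * (w : GaloisField p m)⁻¹)⁻¹ * ε.symm u = (w : GaloisField p m)
          field_simp
    refine step1.trans ?_
    have step2 : (univ.filter fun w : {x : GaloisField p m // x ≠ 0} => (w : GaloisField p m) ∈ Set.range ψ).card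
        = (univ.filter fun b : Fin t → ZMod p => ¬ b = 0).card := by
      symm
      apply Finset.card_bij
        (fun (b : Fin t → ZMod p) (hb : b ∈ univ.filter fun b : Fin t → ZMod p => ¬ b = 0) =>
        (⟨ψ b, fun h0 => (Finset.mem_filter.mp hb).2
          (hψinj (h0.trans (map_zero ψ).symm))⟩ : {x : GaloisField p m // x ≠ 0}))
      · intro b hb
        rw [Finset.mem_filter]
        exact ⟨mem_univ _, ⟨b, rfl⟩⟩
      · intro b hb b' hb' heq
        exact hψinj (congrArg Subtype.val heq)
      · intro w hw
        rw [Finset.mem_filter] at hw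
        obtain ⟨-, b, hb⟩ := hw
        have hb0 : ¬ b = 0 := by
          rintro rfl
          rw [map_zero] at hb
          exact w.2 hb.symm
        exact ⟨b, Finset.mem_filter.mpr ⟨mem_univ _, hb0⟩, Subtype.ext hb⟩
    exact step2.trans card_ne_zero_fun

lemma finrank_V (p t r : ℕ) [Fact p.Prime] (ht0 : t ≠ 0) :
    Module.finrank (ZMod p) (Fin r → GaloisField p t) = r * t := by
  rw [Module.finrank_pi_fintype (ZMod p)]
  simp [GaloisField.finrank p ht0, mul_comm]

noncomputable def coordsV (p t r : ℕ) [Fact p.Prime] (ht0 : t ≠ 0) :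
    (Fin r → GaloisField p t) ≃ₗ[ZMod p] (Fin (r * t) → ZMod p) :=
  ((Module.finBasis (ZMod p) _).reindex (finCongr (finrank_V p t r ht0))).equivFun

noncomputable def deltaK (p t : ℕ) [Fact p.Prime] (ht0 : t ≠ 0) :
    (Fin t → ZMod p) ≃ₗ[ZMod p] GaloisField p t :=
  (((Module.finBasis (ZMod p) (GaloisField p t)).reindex
    (finCongr (GaloisField.finrank p ht0))).equivFun).symm

noncomputable def gMap (p : ℕ) [Fact p.Prime] {t r m : ℕ} (ht0 : t ≠ 0) (hmrt : m ≤ r * t) :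
    (Fin r → GaloisField p t) →ₗ[ZMod p] (Fin m → ZMod p) :=
  truncMap p hmrt ∘ₗ (coordsV p t r ht0).toLinearMap

lemma gMap_fib {t r m : ℕ} (ht0 : t ≠ 0) (hmrt : m ≤ r * t) (u : Fin m → ZMod p) :
    Nat.card {v : Fin r → GaloisField p t // gMap p ht0 hmrt v = u} = p ^ (r * t - m) := by
  exact (Nat.card_congr (Equiv.subtypeEquiv (coordsV p t r ht0).toEquiv
    (q := fun b => truncMap p hmrt b = u) (fun v => Iff.rfl))).trans (fib_trunc hmrt u)

noncomputable def Bmap (p : ℕ) [Fact p.Prime] {t r m : ℕ} (ht0 : t ≠ 0) (hmrt : m ≤ r * t)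
    (v : Fin r → GaloisField p t) : (Fin t → ZMod p) →ₗ[ZMod p] (Fin m → ZMod p) :=
  gMap p ht0 hmrt ∘ₗ
    ((LinearMap.toSpanSingleton (GaloisField p t) (Fin r → GaloisField p t) v).restrictScalars
      (ZMod p)) ∘ₗ (deltaK p t ht0).toLinearMap

lemma Bmap_fib {t r m : ℕ} (ht0 : t ≠ 0) (hmrt : m ≤ r * t)
    (v : Fin r → GaloisField p t) (u : Fin m → ZMod p) :
    fib (Bmap p ht0 hmrt v) u
      = Nat.card {c : GaloisField p t // gMap p ht0 hmrt (c • v) = u} := by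
  apply Nat.card_congr
  exact Equiv.subtypeEquiv (deltaK p t ht0).toEquiv
    (q := fun c => gMap p ht0 hmrt (c • v) = u) (fun b => Iff.rfl)

lemma card_nonzero_K {t : ℕ} (ht0 : t ≠ 0) [Fintype (GaloisField p t)] :
    Nat.card {c : GaloisField p t // ¬ c = 0} = p ^ t - 1 := by
  classical
  rw [Nat.card_eq_fintype_card, Fintype.card_subtype]
  have h1 : (univ.filter fun x : GaloisField p t => ¬ x = 0) = univ.erase 0 := by
    ext x
    simp [Finset.mem_erase, and_comm]
  rw [h1, Finset.card_erase_of_mem (mem_univ _), card_univ, ← Nat.card_eq_fintype_card,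
    GaloisField.card p t ht0]

lemma card_V {t r : ℕ} (ht0 : t ≠ 0) [Fintype (GaloisField p t)] :
    Nat.card (Fin r → GaloisField p t) = p ^ (r * t) := by
  classical
  rw [Nat.card_eq_fintype_card, Fintype.card_fun, ← Nat.card_eq_fintype_card,
    GaloisField.card p t ht0, Fintype.card_fin, ← pow_mul, mul_comm]

open scoped Classical in
lemma cardQ_mul {t r : ℕ} (ht0 : t ≠ 0) [Fintype (GaloisField p t)]
    [Fintype (Quotient (lineSetoid r (GaloisField p t)))] :
    Nat.card (Quotient (lineSetoid r (GaloisField p t))) * (p ^ t - 1) + 1 = p ^ (r * t) := by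
  classical
  have h1 := line_partition (K := GaloisField p t) r (fun _ => True)
  have h2 : ∀ q : Quotient (lineSetoid r (GaloisField p t)),
      Nat.card {c : GaloisField p t // True ∧ ¬ c = 0} = p ^ t - 1 := by
    intro q
    rw [Nat.card_congr (Equiv.subtypeEquivRight
      (p := fun c : GaloisField p t => True ∧ ¬ c = 0)
      (q := fun c : GaloisField p t => ¬ c = 0) (fun c => by simp))]
    exact card_nonzero_K ht0
  rw [Finset.sum_congr rfl (fun q _ => h2 q), Finset.sum_const, card_univ, smul_eq_mul,
    ← Nat.card_eq_fintype_card] at h1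
  have h3 : Nat.card {v : {v : Fin r → GaloisField p t // v ≠ 0} // True}
      = Nat.card {v : Fin r → GaloisField p t // True ∧ ¬ v = 0} := by
    apply Nat.card_congr
    exact ⟨fun w => ⟨w.1.1, trivial, w.1.2⟩, fun w => ⟨⟨w.1, w.2.2⟩, trivial⟩,
      fun w => rfl, fun w => rfl⟩
  rw [h3] at h1
  have h4 := card_split_zero (γ := Fin r → GaloisField p t) (fun _ => True)
  rw [Nat.card_congr (Equiv.subtypeUnivEquiv (fun v => trivial)), if_pos trivial] at h4
  rw [card_V ht0] at h4
  omega

open scoped Classical in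
lemma Bsum {t r m : ℕ} (ht0 : t ≠ 0) (hmrt : m ≤ r * t)
    [Fintype (GaloisField p t)]
    [Fintype (Quotient (lineSetoid r (GaloisField p t)))]
    (u : Fin m → ZMod p) :
    (∑ q : Quotient (lineSetoid r (GaloisField p t)),
      fib (Bmap p ht0 hmrt
        ((Quotient.out q : {v : Fin r → GaloisField p t // v ≠ 0}) : Fin r → GaloisField p t)) u)
      + (if u = 0 then 1 else 0)
      = p ^ (r * t - m)
        + (if u = 0 then Nat.card (Quotient (lineSetoid r (GaloisField p t))) else 0) := by
  classical
  have h1 : ∀ q : Quotient (lineSetoid r (GaloisField p t)),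
      fib (Bmap p ht0 hmrt ((Quotient.out q : {v : Fin r → GaloisField p t // v ≠ 0}) :
        Fin r → GaloisField p t)) u
      = (if u = 0 then 1 else 0)
        + Nat.card {c : GaloisField p t //
            gMap p ht0 hmrt (c • ((Quotient.out q : {v : Fin r → GaloisField p t // v ≠ 0}) :
              Fin r → GaloisField p t)) = u ∧ ¬ c = 0} := by
    intro q
    rw [Bmap_fib]
    rw [card_split_zero (γ := GaloisField p t)
      (fun c => gMap p ht0 hmrt (c • ((Quotient.out q : {v : Fin r → GaloisField p t // v ≠ 0}) :
        Fin r → GaloisField p t)) = u)]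
    have hiff : (gMap p ht0 hmrt ((0 : GaloisField p t) •
        ((Quotient.out q : {v : Fin r → GaloisField p t // v ≠ 0}) :
          Fin r → GaloisField p t)) = u) ↔ (u = 0) := by
      rw [zero_smul, map_zero]
      exact eq_comm
    simp only [hiff]
  rw [Finset.sum_congr rfl (fun q _ => h1 q), Finset.sum_add_distrib, Finset.sum_const,
    card_univ, smul_eq_mul, ← Nat.card_eq_fintype_card]
  rw [line_partition r (fun v => gMap p ht0 hmrt v = u)]
  have h3 : Nat.card {v : {v : Fin r → GaloisField p t // v ≠ 0} //
      gMap p ht0 hmrt (v : Fin r → GaloisField p t) = u} + (if u = 0 then 1 else 0)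
      = p ^ (r * t - m) := by
    have h4 := card_split_zero (γ := Fin r → GaloisField p t)
      (fun v => gMap p ht0 hmrt v = u)
    rw [gMap_fib ht0 hmrt u] at h4
    have h5 : Nat.card {v : {v : Fin r → GaloisField p t // v ≠ 0} //
        gMap p ht0 hmrt (v : Fin r → GaloisField p t) = u}
        = Nat.card {v : Fin r → GaloisField p t // gMap p ht0 hmrt v = u ∧ ¬ v = 0} := by
      apply Nat.card_congr
      exact ⟨fun w => ⟨w.1.1, w.2, w.1.2⟩, fun w => ⟨⟨w.1, w.2.2⟩, w.2.1⟩,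
        fun w => rfl, fun w => rfl⟩
    rw [h5]
    have hiff6 : (gMap p ht0 hmrt 0 = u) ↔ (u = 0) := by
      rw [map_zero]
      exact eq_comm
    simp only [hiff6] at h4
    by_cases hu : u = 0
    · simp only [if_pos hu] at h4 ⊢
      omega
    · simp only [if_neg hu] at h4 ⊢
      omega
  by_cases hu : u = 0
  · simp only [if_pos hu] at h3 ⊢
    omega
  · simp only [if_neg hu] at h3 ⊢
    omega

lemma construct_small {t m n mu β w : ℕ} (hmt : m ≤ t) (hmu : 0 < mu)
    (h1 : β * p ^ (t - m) = mu) (h2 : β + w = n) (h3 : w * p ^ t + 1 = n) :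
    ∃ L : Fin n → ((Fin t → ZMod p) →ₗ[ZMod p] (Fin m → ZMod p)),
      ∀ u, ∑ i, fib (L i) u = if u = 0 then n + (mu - 1) else mu := by
  classical
  have hcard : Fintype.card (Fin β ⊕ Fin w) = n := by simp [h2]
  let e : (Fin β ⊕ Fin w) ≃ Fin n := Fintype.equivFinOfCardEq hcard
  let L0 : (Fin β ⊕ Fin w) → ((Fin t → ZMod p) →ₗ[ZMod p] (Fin m → ZMod p)) :=
    Sum.elim (fun _ => truncMap p hmt) (fun _ => 0)
  refine ⟨fun i => L0 (e.symm i), fun u => ?_⟩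
  rw [Equiv.sum_comp e.symm (fun j => fib (L0 j) u)]
  rw [Fintype.sum_sum_type]
  simp only [L0, Sum.elim_inl, Sum.elim_inr]
  rw [Finset.sum_const, Finset.sum_const, card_univ, card_univ, Fintype.card_fin,
    Fintype.card_fin, smul_eq_mul, smul_eq_mul, fib_trunc hmt u, fib_zero u]
  by_cases hu : u = 0
  · simp only [if_pos hu]
    omega
  · simp only [if_neg hu]
    omega

open scoped Classical in
lemma construct_large {t m n mu r α n₂ : ℕ} (ht0 : t ≠ 0) (hm0 : m ≠ 0) (htm : t ≤ m)
    (hmrt : m ≤ r * t) (hmu0 : 0 < mu)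
    (hmu : p ^ (r * t - m) + α * (p ^ t - 1) = mu)
    (hn2 : n₂ * (p ^ t - 1) = p ^ (r * t) - 1)
    (hcard : α * (p ^ m - 1) + n₂ + α = n) :
    ∃ L : Fin n → ((Fin t → ZMod p) →ₗ[ZMod p] (Fin m → ZMod p)),
      ∀ u, ∑ i, fib (L i) u = if u = 0 then n + (mu - 1) else mu := by
  classical
  haveI : Fintype (GaloisField p m) := Fintype.ofFinite _
  haveI : Fintype (GaloisField p t) := Fintype.ofFinite _
  haveI : Fintype (Quotient (lineSetoid r (GaloisField p t))) := Fintype.ofFinite _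
  have hp2 : 2 ≤ p := (Fact.out : p.Prime).two_le
  have hpt : p ≤ p ^ t := Nat.le_self_pow ht0 p
  have hprt : 1 ≤ p ^ (r * t) := Nat.one_le_pow _ _ (by omega)
  have hQ := cardQ_mul (p := p) (r := r) ht0
  have hQn : Nat.card (Quotient (lineSetoid r (GaloisField p t))) = n₂ := by
    apply Nat.eq_of_mul_eq_mul_right (show 0 < p ^ t - 1 by omega)
    omega
  have hFcard : Fintype.card {x : GaloisField p m // x ≠ 0} = p ^ m - 1 := by
    rw [← Nat.card_eq_fintype_card]
    rw [Nat.card_congr (Equiv.subtypeEquivRight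
      (p := fun x : GaloisField p m => x ≠ 0)
      (q := fun x : GaloisField p m => ¬ x = 0) (fun c => Iff.rfl))]
    exact card_nonzero_K (t := m) hm0
  have hcards : Fintype.card ((Fin α × {x : GaloisField p m // x ≠ 0}) ⊕
      (Quotient (lineSetoid r (GaloisField p t)) ⊕ Fin α)) = n := by
    have hQf : Fintype.card (Quotient (lineSetoid r (GaloisField p t))) = n₂ := by
      rw [← Nat.card_eq_fintype_card]
      exact hQn
    rw [Fintype.card_sum, Fintype.card_sum, Fintype.card_prod, Fintype.card_fin, hFcard, hQf]
    omega
  let e : ((Fin α × {x : GaloisField p m // x ≠ 0}) ⊕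
      (Quotient (lineSetoid r (GaloisField p t)) ⊕ Fin α)) ≃ Fin n :=
    Fintype.equivFinOfCardEq hcards
  let L0 : ((Fin α × {x : GaloisField p m // x ≠ 0}) ⊕
      (Quotient (lineSetoid r (GaloisField p t)) ⊕ Fin α)) →
      ((Fin t → ZMod p) →ₗ[ZMod p] (Fin m → ZMod p)) :=
    Sum.elim (fun ca => Amap p hm0 htm (ca.2 : GaloisField p m))
      (Sum.elim (fun q => Bmap p ht0 hmrt
        ((Quotient.out q : {v : Fin r → GaloisField p t // v ≠ 0}) :
          Fin r → GaloisField p t)) (fun _ => 0))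
  refine ⟨fun i => L0 (e.symm i), fun u => ?_⟩
  rw [Equiv.sum_comp e.symm (fun j => fib (L0 j) u)]
  rw [Fintype.sum_sum_type, Fintype.sum_sum_type, Fintype.sum_prod_type]
  simp only [L0, Sum.elim_inl, Sum.elim_inr]
  rw [Finset.sum_congr rfl (fun (c : Fin α) _ => Asum hm0 htm u)]
  rw [Finset.sum_congr rfl (fun (c : Fin α) (_ : c ∈ univ) => fib_zero (t := t) u)]
  simp only [Finset.sum_const, card_univ, Fintype.card_fin, smul_eq_mul]
  have hB := Bsum (p := p) ht0 hmrt u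
  have hx : α * p ^ t = α * (p ^ t - 1) + α := by
    obtain ⟨d, hd⟩ := Nat.exists_eq_add_of_le (show 1 ≤ p ^ t by omega)
    rw [hd, Nat.add_sub_cancel_left, Nat.mul_add, Nat.mul_one]
    omega
  by_cases hu : u = 0
  · simp only [if_pos hu] at hB ⊢
    rw [hQn] at hB
    omega
  · simp only [if_neg hu] at hB ⊢
    omega

lemma exists_T {t m n mu : ℕ} (hmu : 0 < mu)
    (L : Fin n → ((Fin t → ZMod p) →ₗ[ZMod p] (Fin m → ZMod p)))
    (hL : ∀ u, ∑ i, fib (L i) u = if u = 0 then n + (mu - 1) else mu) :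
    ∃ T : Fin n → Fin t → Fin m → ZMod p,
      IsMultispread T (mu - 1) mu ∧
      ∀ x : Fin n → Fin t → ZMod p,
        Nat.card {y : Fin n → Fin t → ZMod p //
          synd T y = 0 ∧ hammingDist x y ≤ 1} = mu := by
  refine ⟨fun i j => L i (Pi.single j 1), ?_, ?_⟩
  · intro u
    calc ∑ i, spanCount (fun j => L i (Pi.single j 1)) u = ∑ i, fib (L i) u :=
        Finset.sum_congr rfl (fun i _ => spanCount_of_linear (L i) u)
      _ = _ := hL u
  · intro x
    have hc := code_count hmu L hL x
    rw [← hc]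
    apply Nat.card_congr
    apply Equiv.subtypeEquivRight
    intro y
    rw [synd_of_linear]

lemma s_spec (m t : ℕ) (ht : 0 < t) :
    (t - m % t) % t < t ∧ t ∣ m + ((t - m % t) % t) := by
  have h1 : m % t < t := Nat.mod_lt _ ht
  refine ⟨Nat.mod_lt _ ht, ?_⟩
  by_cases h0 : m % t = 0
  · rw [h0, Nat.sub_zero, Nat.mod_self, Nat.add_zero]
    exact Nat.dvd_of_mod_eq_zero h0
  · have h2 : t - m % t < t := by omega
    rw [Nat.mod_eq_of_lt h2]
    have hdm := Nat.div_add_mod m t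
    have hcm : t * (m / t) = (m / t) * t := mul_comm _ _
    refine ⟨m / t + 1, ?_⟩
    have h3 : m + (t - m % t) = (m / t) * t + t := by omega
    rw [h3]
    ring


/-- Sufficiency: if n ≡ 1 (mod q), q = p^t, and μ·q^n/((q-1)n+1) = p^k, then
    (with m = nt - k) there is a (μ-1,μ)-spread of t-multisubspaces of F_p^m,
    and hence an F_p-linear μ-fold 1-perfect code in H(n,q). -/
theorem stmt_18 (p t n μ k : ℕ) [hp : Fact p.Prime] (ht : 0 < t) (hμ : 0 < μ)
    (hn : n ≡ 1 [MOD p ^ t]) (hk : k < n * t)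
    (h : μ * (p ^ t) ^ n = ((p ^ t - 1) * n + 1) * p ^ k) :
    ∃ T : Fin n → Fin t → Fin (n * t - k) → ZMod p,
      IsMultispread T (μ - 1) μ ∧
      ∀ x : Fin n → Fin t → ZMod p,
        Nat.card {y : Fin n → Fin t → ZMod p //
          synd T y = 0 ∧ hammingDist x y ≤ 1} = μ := by
  classical
  have hp2 : 2 ≤ p := hp.out.two_le
  set m := n * t - k with hm
  have hn1 : 1 ≤ n := by
    rcases Nat.eq_zero_or_pos n with h0 | h0
    · subst h0
      rw [zero_mul] at hk
      omega
    · exact h0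
  have ht0 : t ≠ 0 := by omega
  have hm0 : m ≠ 0 := by omega
  have hq1 : 1 ≤ p ^ t := Nat.one_le_pow _ _ (by omega)
  have hqp : p ≤ p ^ t := Nat.le_self_pow ht0 p
  have hpm1 : 1 ≤ p ^ m := Nat.one_le_pow _ _ (by omega)
  have hpow : (p ^ t) ^ n = p ^ m * p ^ k := by
    rw [← pow_mul, ← pow_add]
    congr 1
    have := mul_comm t n
    omega
  have hN : μ * p ^ m = (p ^ t - 1) * n + 1 := by
    apply Nat.eq_of_mul_eq_mul_right (show 0 < p ^ k from Nat.one_le_pow _ _ (by omega))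
    rw [hpow, ← mul_assoc] at h
    exact h
  obtain ⟨w, hw⟩ : p ^ t ∣ n - 1 := (Nat.modEq_iff_dvd' hn1).mp hn.symm
  have hwn : n = p ^ t * w + 1 := by omega
  by_cases hmt : m ≤ t
  · -- small case
    set q1 := p ^ t - 1 with hq1d
    have hq1e : p ^ t = q1 + 1 := by omega
    set β := q1 * w + 1 with hβ
    have hb1 : μ * p ^ m = β * p ^ t := by
      rw [hN, hwn, hβ, hq1e]
      ring
    have hsplitp : p ^ t = p ^ (t - m) * p ^ m := by
      rw [← pow_add]
      congr 1
      omega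
    have h1 : β * p ^ (t - m) = μ := by
      apply Nat.eq_of_mul_eq_mul_right (show 0 < p ^ m by omega)
      rw [mul_assoc, ← hsplitp, ← hb1]
    have hmono : q1 * w ≤ p ^ t * w := Nat.mul_le_mul_right w (by omega)
    have hβn : β ≤ n := by omega
    have hptw : p ^ t * w = q1 * w + w := by rw [hq1e]; ring
    obtain ⟨L, hL⟩ := construct_small (p := p) hmt hμ h1 (show β + w = n by omega)
      (show w * p ^ t + 1 = n by rw [mul_comm]; omega)
    exact exists_T hμ L hL
  · -- large case
    have htm : t ≤ m := by omega
    obtain ⟨hslt, hsdvd⟩ := s_spec m t ht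
    set s := (t - m % t) % t with hs
    set r := (m + s) / t with hrd
    have hr : r * t = m + s := Nat.div_mul_cancel hsdvd
    have hmrt : m ≤ r * t := by omega
    have hsrt : r * t - m = s := by omega
    set q1 := p ^ t - 1 with hq1d
    have hprt1 : 1 ≤ p ^ (r * t) := Nat.one_le_pow _ _ (by omega)
    have hdvd : q1 ∣ p ^ (r * t) - 1 := by
      have h2 := Nat.sub_dvd_pow_sub_pow (p ^ t) 1 r
      rw [one_pow, ← pow_mul, mul_comm t r] at h2
      exact h2
    have hps1 : 1 ≤ p ^ s := Nat.one_le_pow _ _ (by omega)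
    have hpp : p ^ m * p ^ s = p ^ (r * t) := by rw [← pow_add]; congr 1; omega
    have key : μ * p ^ (r * t) = (q1 * n + 1) * p ^ s := by
      rw [← hpp, ← mul_assoc, hN]
    have hmod : μ ≡ p ^ s [MOD q1] := by
      have c0 : (1 : ℕ) ≡ p ^ (r * t) [MOD q1] := (Nat.modEq_iff_dvd' hprt1).mpr hdvd
      have c1 : μ * 1 ≡ μ * p ^ (r * t) [MOD q1] := c0.mul_left μ
      rw [key] at c1
      have c2 : (q1 * n + 1) ≡ 1 [MOD q1] := by
        have hd : q1 ∣ (q1 * n + 1) - 1 := by simpa using dvd_mul_right q1 n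
        exact ((Nat.modEq_iff_dvd' (by omega)).mpr hd).symm
      have c3 : (q1 * n + 1) * p ^ s ≡ 1 * p ^ s [MOD q1] := c2.mul_right _
      have c4 := c1.trans c3
      simpa using c4
    have hq1pos : 0 < q1 := by omega
    have hps_le : p ^ s ≤ μ := by
      by_contra hlt
      push_neg at hlt
      have hd2 : q1 ∣ p ^ s - μ := (Nat.modEq_iff_dvd' (le_of_lt hlt)).mp hmod
      have hle : q1 ≤ p ^ s - μ := Nat.le_of_dvd (by omega) hd2
      have hpst : p ^ s < p ^ t := Nat.pow_lt_pow_right (by omega) hslt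
      omega
    obtain ⟨α, hα0⟩ := (Nat.modEq_iff_dvd' hps_le).mp hmod.symm
    have hα : μ = p ^ s + α * q1 := by
      have := mul_comm q1 α
      omega
    have E : p ^ (r * t) + α * q1 * p ^ m = q1 * n + 1 := by
      have e1 : μ * p ^ m = p ^ (r * t) + α * q1 * p ^ m := by
        rw [hα, add_mul]
        congr 1
        rw [mul_comm]
        exact hpp
      rw [← e1, hN]
    have F : q1 * (α * p ^ m) = α * q1 * p ^ m := by ring
    have hαpm : α * p ^ m ≤ n := Nat.le_of_mul_le_mul_left (by omega) hq1pos
    have hsum : α * p ^ m + (n - α * p ^ m) = n := by omega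
    have G : q1 * n = q1 * (α * p ^ m) + q1 * (n - α * p ^ m) := by
      rw [← mul_add, hsum]
    have hn2 : (n - α * p ^ m) * q1 = p ^ (r * t) - 1 := by
      have := mul_comm (n - α * p ^ m) q1
      omega
    have hy : α * p ^ m = α * (p ^ m - 1) + α := by
      obtain ⟨d, hd⟩ := Nat.exists_eq_add_of_le (show 1 ≤ p ^ m by omega)
      rw [hd, Nat.add_sub_cancel_left, Nat.mul_add, Nat.mul_one]
      omega
    have hcard : α * (p ^ m - 1) + (n - α * p ^ m) + α = n := by omega
    obtain ⟨L, hL⟩ := construct_large (p := p) ht0 hm0 htm hmrt hμ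
      (show p ^ (r * t - m) + α * q1 = μ by rw [hsrt]; omega)
      hn2 hcard
    exact exists_T hμ L hL
end
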